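/- arXiv:1703.08739 — 10 statements merged into one kernel-verified Lean document; each statement's English description precedes it below -/
import Mathlib

section
/- If G is a k-geodetic digraph with minimum out-degree at least d and order M(d,k) + ε where ε < M(d,k-1), then every vertex of G has out-degree exactly d. -/
/-- Moore bound `M(d,k) = 1 + d + ... + d^k`. -/
def moore (d k : ℕ) : ℕ := ∑ i ∈ Finset.range (k + 1), d ^ i

/-- Moore bound with integer argument, with the convention `M(d,k) = 0` for `k < 0`. -/
def mooreZ (d : ℕ) (j : ℤ) : ℕ := if j < 0 then 0 else moore d j.toNat

/-- Walks of length at most `k` from `u` to `v` in the digraph with arc relation `A`,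
encoded as vertex lists (so a walk of length `≤ k` is a list of length `≤ k+1`). -/
def walksUpTo {V : Type*} (A : V → V → Prop) (k : ℕ) (u v : V) : Set (List V) :=
  {l | l.Chain' A ∧ l.head? = some u ∧ l.getLast? = some v ∧ l.length ≤ k + 1}

/-- A digraph is `k`-geodetic if between any ordered pair of vertices there is at most
one directed walk of length at most `k`. -/
def IsGeodetic {V : Type*} (A : V → V → Prop) (k : ℕ) : Prop :=
  ∀ u v : V, (walksUpTo A k u v).Subsingleton

/-- `v` is reachable from `u` by a directed walk of length at most `k`. -/
def reachIn {V : Type*} (A : V → V → Prop) (k : ℕ) (u v : V) : Prop :=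
  (walksUpTo A k u v).Nonempty

/-- Out-degree of a vertex. -/
noncomputable def outDeg {V : Type*} (A : V → V → Prop) (u : V) : ℕ := {v | A u v}.ncard

/-- In-degree of a vertex. -/
noncomputable def inDeg {V : Type*} (A : V → V → Prop) (v : V) : ℕ := {u | A u v}.ncard

/-- The outlier set `O(u)`: vertices not reachable from `u` within distance `k`. -/
def outlier {V : Type*} (A : V → V → Prop) (k : ℕ) (u : V) : Set V :=
  {v | ¬ reachIn A k u v}

set_option linter.unusedSectionVars false
section Aux
open Finset
variable {V : Type*} [Fintype V] [DecidableEq V] (A : V → V → Prop) [DecidableRel A]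

def nbr (w : V) : Finset V := Finset.univ.filter (fun x => A w x)

lemma nbr_card (w : V) : (nbr A w).card = outDeg A w := by
  have : {v | A w v} = ↑(nbr A w) := by ext x; simp [nbr]
  rw [outDeg, this, Set.ncard_coe_finset]

def ext1 (l : List V) : Finset (List V) :=
  match l.getLast? with
  | none => ∅
  | some w => (nbr A w).image (fun x => l ++ [x])

lemma mem_ext1 {l m : List V} :
    m ∈ ext1 A l ↔ ∃ w, l.getLast? = some w ∧ ∃ x, A w x ∧ m = l ++ [x] := by
  rcases h : l.getLast? with _ | w <;> simp [ext1, h, nbr, eq_comm]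

lemma ext1_card {l : List V} {w : V} (h : l.getLast? = some w) :
    (ext1 A l).card = outDeg A w := by
  rw [ext1, h, Finset.card_image_of_injective _ (fun a b hab => by
    simpa using List.append_cancel_left hab), nbr_card]

def W (u : V) : ℕ → Finset (List V)
  | 0 => {[u]}
  | n + 1 => (W u n).biUnion (ext1 A)

lemma W_spec (u : V) : ∀ n, ∀ l ∈ W A u n,
    l.Chain' A ∧ l.head? = some u ∧ l.length = n + 1 := by
  intro n
  induction n with
  | zero => intro l hl; simp [W] at hl; subst hl; exact ⟨List.isChain_singleton u, by simp⟩
  | succ n ih =>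
    intro l hl
    simp only [W, Finset.mem_biUnion] at hl
    obtain ⟨l', hl', hm⟩ := hl
    obtain ⟨hc, hh, hlen⟩ := ih l' hl'
    obtain ⟨w, hw, x, hx, rfl⟩ := (mem_ext1 A).1 hm
    refine ⟨?_, ?_, by simp [hlen]⟩
    · show List.IsChain A _; rw [List.isChain_append]
      exact ⟨hc, List.isChain_singleton x, by simpa [hw] using hx⟩
    · have : l' ≠ [] := by rintro rfl; simp at hh
      rw [List.head?_append_of_ne_nil _ this]; exact hh

lemma W_ne_nil (u : V) (n : ℕ) {l : List V} (hl : l ∈ W A u n) : l ≠ [] := by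
  intro h; have := (W_spec A u n l hl).2.2; simp [h] at this

lemma W_card_succ (d : ℕ) (u : V) (n : ℕ) (hout : ∀ w : V, d ≤ outDeg A w) :
    d * (W A u n).card ≤ (W A u (n+1)).card := by
  have hdisj : ∀ l₁ ∈ W A u n, ∀ l₂ ∈ W A u n, l₁ ≠ l₂ →
      Disjoint (ext1 A l₁) (ext1 A l₂) := by
    intro l₁ _ l₂ _ hne
    refine Finset.disjoint_left.2 fun m hm₁ hm₂ => hne ?_
    obtain ⟨w₁, _, x₁, _, rfl⟩ := (mem_ext1 A).1 hm₁
    obtain ⟨w₂, _, x₂, _, h⟩ := (mem_ext1 A).1 hm₂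
    calc l₁ = (l₁ ++ [x₁]).dropLast := (List.dropLast_concat).symm
    _ = (l₂ ++ [x₂]).dropLast := by rw [h]
    _ = l₂ := List.dropLast_concat
  rw [show W A u (n+1) = (W A u n).biUnion (ext1 A) from rfl,
    Finset.card_biUnion hdisj]
  calc d * (W A u n).card = ∑ _l ∈ W A u n, d := by simp [mul_comm]
  _ ≤ ∑ l ∈ W A u n, (ext1 A l).card := by
      refine Finset.sum_le_sum fun l hl => ?_
      obtain ⟨w, hw⟩ := Option.isSome_iff_exists.1
        (List.getLast?_isSome.2 (W_ne_nil A u n hl))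
      rw [ext1_card A hw]; exact hout w

lemma W_card_one (u : V) : (W A u 1).card = outDeg A u := by
  rw [show W A u 1 = ({[u]} : Finset (List V)).biUnion (ext1 A) from rfl]
  simp only [Finset.singleton_biUnion]
  exact ext1_card A (by simp)

lemma W_card_zero (u : V) : (W A u 0).card = 1 := rfl

lemma W_mem_walks {k : ℕ} (u : V) {n : ℕ} (hn : n ≤ k) {l : List V}
    (hl : l ∈ W A u n) {v : V} (hv : l.getLast? = some v) :
    l ∈ walksUpTo A k u v := by
  obtain ⟨hc, hh, hlen⟩ := W_spec A u n l hl
  exact ⟨hc, hh, hv, by omega⟩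

lemma geo_inj {k : ℕ} (hgeo : IsGeodetic A k) (u : V) {n₁ n₂ : ℕ}
    (h₁ : n₁ ≤ k) (h₂ : n₂ ≤ k) {l₁ l₂ : List V}
    (hl₁ : l₁ ∈ W A u n₁) (hl₂ : l₂ ∈ W A u n₂)
    (he : l₁.getLast? = l₂.getLast?) : l₁ = l₂ := by
  obtain ⟨v, hv⟩ := Option.isSome_iff_exists.1
    (List.getLast?_isSome.2 (W_ne_nil A u n₁ hl₁))
  exact hgeo u v (W_mem_walks A u h₁ hl₁ hv)
    (W_mem_walks A u h₂ hl₂ (he ▸ hv))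

lemma sum_W_card_le {k : ℕ} (hgeo : IsGeodetic A k) (u : V) :
    ∑ n ∈ Finset.range (k+1), (W A u n).card ≤ Fintype.card V := by
  classical
  set T : Finset (Option V) :=
    (Finset.range (k+1)).biUnion (fun n => (W A u n).image List.getLast?) with hT
  have hdisj : ∀ n₁ ∈ Finset.range (k+1), ∀ n₂ ∈ Finset.range (k+1), n₁ ≠ n₂ →
      Disjoint ((W A u n₁).image List.getLast?) ((W A u n₂).image List.getLast?) := by
    intro n₁ hn₁ n₂ hn₂ hne
    simp only [Finset.mem_range] at hn₁ hn₂
    refine Finset.disjoint_left.2 fun o ho₁ ho₂ => hne ?_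
    obtain ⟨l₁, hl₁, rfl⟩ := Finset.mem_image.1 ho₁
    obtain ⟨l₂, hl₂, he⟩ := Finset.mem_image.1 ho₂
    have := geo_inj A hgeo u (by omega) (by omega) hl₁ hl₂ he.symm
    subst this
    have e₁ := (W_spec A u n₁ l₁ hl₁).2.2
    have e₂ := (W_spec A u n₂ l₁ hl₂).2.2
    omega
  have hcardT : T.card = ∑ n ∈ Finset.range (k+1), (W A u n).card := by
    rw [hT, Finset.card_biUnion hdisj]
    refine Finset.sum_congr rfl fun n hn => ?_
    simp only [Finset.mem_range] at hn
    exact Finset.card_image_of_injOn fun l₁ hl₁ l₂ hl₂ he =>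
      geo_inj A hgeo u (by omega) (by omega) hl₁ hl₂ he
  have hsub : T ⊆ Finset.univ.image some := by
    intro o ho
    rw [hT] at ho
    obtain ⟨n, _, hn⟩ := Finset.mem_biUnion.1 ho
    obtain ⟨l, hl, rfl⟩ := Finset.mem_image.1 hn
    obtain ⟨v, hv⟩ := Option.isSome_iff_exists.1
      (List.getLast?_isSome.2 (W_ne_nil A u n hl))
    simp [hv]
  calc ∑ n ∈ Finset.range (k+1), (W A u n).card = T.card := hcardT.symm
  _ ≤ (Finset.univ.image (some : V → Option V)).card := Finset.card_le_card hsub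
  _ = Fintype.card V := by
      rw [Finset.card_image_of_injective _ (Option.some_injective V)]; simp

end Aux



/-- If `G` is a `k`-geodetic digraph with minimum out-degree at least `d`
and order `M(d,k) + ε` with `ε < M(d,k-1)`, then every vertex has out-degree exactly `d`. -/
theorem stmt1 {V : Type*} [Fintype V] (A : V → V → Prop) (d k ε : ℕ)
    (hgeo : IsGeodetic A k) (hout : ∀ u : V, d ≤ outDeg A u)
    (hcard : Fintype.card V = moore d k + ε)
    (hε : ε < mooreZ d ((k : ℤ) - 1)) :
    ∀ u : V, outDeg A u = d := by
  classical
  intro u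
  by_contra hne
  have houtu : d + 1 ≤ outDeg A u := lt_of_le_of_ne (hout u) (Ne.symm hne)
  obtain ⟨m, rfl⟩ : ∃ m, k = m + 1 := by
    cases k with
    | zero => exfalso; simp [mooreZ] at hε
    | succ m => exact ⟨m, rfl⟩
  have hεm : ε < moore d m := by
    have h1 : ((m+1 : ℕ) : ℤ) - 1 = (m : ℤ) := by push_cast; ring
    rw [h1] at hε
    simpa [mooreZ, not_lt.mpr (Int.natCast_nonneg m)] using hε
  have hW : ∀ n, (d+1) * d^n ≤ (W A u (n+1)).card := by
    intro n; induction n with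
    | zero => simpa [W_card_one] using houtu
    | succ n ih =>
      calc (d+1)*d^(n+1) = d * ((d+1)*d^n) := by ring
      _ ≤ d * (W A u (n+1)).card := Nat.mul_le_mul_left _ ih
      _ ≤ _ := W_card_succ A d u (n+1) hout
  have hsum := sum_W_card_le A hgeo u
  have hlow : 1 + (d+1) * moore d m ≤ ∑ n ∈ Finset.range (m+1+1), (W A u n).card := by
    rw [Finset.sum_range_succ' (fun n => (W A u n).card) (m+1)]
    have h2 : ∑ n ∈ Finset.range (m+1), (d+1)*d^n
        ≤ ∑ n ∈ Finset.range (m+1), (W A u (n+1)).card :=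
      Finset.sum_le_sum fun n _ => hW n
    have h3 : (d+1) * moore d m = ∑ n ∈ Finset.range (m+1), (d+1)*d^n := by
      rw [moore, Finset.mul_sum]
    have h0 : (W A u 0).card = 1 := W_card_zero A u
    omega
  have hmoore : moore d (m+1) = 1 + d * moore d m := by
    rw [moore, Finset.sum_range_succ' (fun i => d^i) (m+1)]
    have h4 : ∑ i ∈ Finset.range (m+1), d^(i+1) = d * moore d m := by
      rw [moore, Finset.mul_sum]
      exact Finset.sum_congr rfl fun i _ => by ring
    simp only [h4]; ring
  have hexp : (d+1) * moore d m = d * moore d m + moore d m := by ring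
  omega
end

section
/- In a k-geodetic digraph with out-degree d, if v is a vertex with d^+(v) ≥ d+1, then the number of vertices reachable from v within distance k is at least M(d,k) + M(d,k-1). -/
/-! ### Auxiliary machinery -/

/-- Follow a list of choices from a starting vertex, recording the visited vertices. -/
def pathList {V : Type*} {d : ℕ} (g : V → Fin d → V) : V → List (Fin d) → List V
  | u, [] => [u]
  | u, c :: cs => u :: pathList g (g u c) cs

theorem pathList_head? {V : Type*} {d : ℕ} (g : V → Fin d → V) (u : V) (cs : List (Fin d)) :
    (pathList g u cs).head? = some u := by cases cs <;> rfl

theorem pathList_length {V : Type*} {d : ℕ} (g : V → Fin d → V) (cs : List (Fin d)) (u : V) :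
    (pathList g u cs).length = cs.length + 1 := by
  induction cs generalizing u with
  | nil => rfl
  | cons c cs ih => simp [pathList, ih]

theorem pathList_ne_nil {V : Type*} {d : ℕ} (g : V → Fin d → V) (cs : List (Fin d)) (u : V) :
    pathList g u cs ≠ [] := by
  cases cs <;> simp [pathList]

theorem pathList_chain' {V : Type*} {d : ℕ} {A : V → V → Prop} (g : V → Fin d → V)
    (hg : ∀ u c, A u (g u c)) (cs : List (Fin d)) (u : V) :
    (pathList g u cs).Chain' A := by
  induction cs generalizing u with
  | nil => exact List.isChain_singleton _
  | cons c cs ih =>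
    rw [pathList]; refine List.isChain_cons.mpr ?_
    refine ⟨?_, ih _⟩
    intro y hy
    rw [pathList_head?] at hy
    cases hy
    exact hg u c

theorem pathList_inj {V : Type*} {d : ℕ} (g : V → Fin d → V)
    (hg : ∀ u : V, Function.Injective (g u)) :
    ∀ (cs cs' : List (Fin d)) (u : V), pathList g u cs = pathList g u cs' → cs = cs' := by
  intro cs
  induction cs with
  | nil =>
    intro cs' u h
    cases cs' with
    | nil => rfl
    | cons c' t' =>
      exfalso
      simp only [pathList, List.cons.injEq, true_and] at h
      exact pathList_ne_nil g t' (g u c') h.symm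
  | cons c t ih =>
    intro cs' u h
    cases cs' with
    | nil =>
      exfalso
      simp only [pathList, List.cons.injEq, true_and] at h
      exact pathList_ne_nil g t (g u c) h
    | cons c' t' =>
      simp only [pathList, List.cons.injEq, true_and] at h
      have hc : g u c = g u c' := by
        have := congrArg List.head? h
        rw [pathList_head?, pathList_head?] at this
        exact Option.some.inj this
      have hcc : c = c' := hg u hc
      subst hcc
      rw [ih t' (g u c) h]

/-- In a `k`-geodetic digraph with out-degree `d`, if `v` is a vertex with
`d⁺(v) ≥ d+1`, then the number of vertices reachable from `v` within distance `k` is at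
least `M(d,k) + M(d,k-1)`. -/
theorem stmt2 {V : Type*} [Fintype V] (A : V → V → Prop) (d k : ℕ)
    (hgeo : IsGeodetic A k) (hout : ∀ u : V, d ≤ outDeg A u)
    (v : V) (hv : d + 1 ≤ outDeg A v) :
    moore d k + mooreZ d ((k : ℤ) - 1) ≤ {w | reachIn A k v w}.ncard := by
  classical
  -- extract injective neighbor-selection functions
  have hemb : ∀ (u : V) (m : ℕ), m ≤ outDeg A u →
      ∃ f : Fin m → V, Function.Injective f ∧ ∀ i, A u (f i) := by
    intro u m hm
    have h1 : m ≤ Nat.card {w | A u w} := by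
      rwa [Nat.card_coe_set_eq]
    rw [Nat.card_eq_fintype_card] at h1
    obtain ⟨f⟩ := Function.Embedding.nonempty_of_card_le
      (show Fintype.card (Fin m) ≤ Fintype.card {w | A u w} by simpa using h1)
    exact ⟨fun i => (f i : V), fun i j h => f.injective (Subtype.ext h), fun i => (f i).2⟩
  choose g ginj gadj using fun u => hemb u d (hout u)
  obtain ⟨g', g'inj, g'adj⟩ := hemb v (d + 1) hv
  -- the index type
  set I := Option ((i : Fin k) × (Fin (d + 1) × (Fin (i : ℕ) → Fin d))) with hI
  -- the walks
  let W : I → List V := fun x =>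
    match x with
    | none => [v]
    | some ⟨_, a, f⟩ => v :: pathList g (g' a) (List.ofFn f)
  have hWne : ∀ x, W x ≠ [] := by
    rintro (_ | ⟨i, a, f⟩) <;> simp [W]
  have hWlen : ∀ (i : Fin k) (a : Fin (d + 1)) (f : Fin (i : ℕ) → Fin d),
      (W (some ⟨i, a, f⟩)).length = (i : ℕ) + 2 := by
    intro i a f
    simp [W, pathList_length]
  -- every W x is a walk from v to its endpoint
  have hWmem : ∀ x, W x ∈ walksUpTo A k v ((W x).getLast (hWne x)) := by
    rintro (_ | ⟨i, a, f⟩)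
    · refine ⟨List.isChain_singleton _, by simp [W], ?_, by simp [W]⟩
      exact List.getLast?_eq_getLast (hWne none)
    · refine ⟨?_, ?_, ?_, ?_⟩
      · show List.Chain' A (v :: pathList g (g' a) (List.ofFn f))
        refine List.isChain_cons.mpr ?_
        refine ⟨?_, pathList_chain' g gadj _ _⟩
        intro y hy
        rw [pathList_head?] at hy
        cases hy
        exact g'adj a
      · rfl
      · exact List.getLast?_eq_getLast (hWne (some ⟨i, a, f⟩))
      · rw [hWlen]
        have := i.2
        omega
  -- W is injective
  have hWinj : Function.Injective W := by
    rintro (_ | ⟨i, a, f⟩) (_ | ⟨i', a', f'⟩) h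
    · rfl
    · exfalso
      have := congrArg List.length h
      rw [hWlen] at this
      simp [W] at this
    · exfalso
      have := congrArg List.length h
      rw [hWlen] at this
      simp [W] at this
    · have hi : (i : ℕ) = (i' : ℕ) := by
        have hl := congrArg List.length h
        rw [hWlen, hWlen] at hl
        omega
      have hii : i = i' := Fin.ext hi
      subst hii
      simp only [W, List.cons.injEq, true_and] at h
      have ha : g' a = g' a' := by
        have := congrArg List.head? h
        rw [pathList_head?, pathList_head?] at this
        exact Option.some.inj this
      have haa : a = a' := g'inj ha
      subst haa
      have hf : List.ofFn f = List.ofFn f' := pathList_inj g ginj _ _ _ h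
      have hff : f = f' := List.ofFn_injective hf
      subst hff
      rfl
  -- endpoint map
  let e : I → V := fun x => (W x).getLast (hWne x)
  have heinj : Function.Injective e := by
    intro x y h
    apply hWinj
    exact hgeo v (e y) (by rw [← h]; exact hWmem x) (hWmem y)
  have hrange : Set.range e ⊆ {w | reachIn A k v w} := by
    rintro _ ⟨x, rfl⟩
    exact ⟨W x, hWmem x⟩
  have hcard : Nat.card I ≤ {w | reachIn A k v w}.ncard := by
    calc Nat.card I = Nat.card (Set.range e) := (Nat.card_range_of_injective heinj).symm
      _ = (Set.range e).ncard := Nat.card_coe_set_eq _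
      _ ≤ _ := Set.ncard_le_ncard hrange (Set.toFinite _)
  refine le_trans ?_ hcard
  -- compute the cardinality of I
  have hIcard : Nat.card I = (∑ i : Fin k, (d + 1) * d ^ (i : ℕ)) + 1 := by
    rw [hI, Nat.card_eq_fintype_card, Fintype.card_option, Fintype.card_sigma]
    congr 1
    apply Finset.sum_congr rfl
    intro i _
    simp [Fintype.card_prod, Fintype.card_fun, mul_comm]
  rw [hIcard, Fin.sum_univ_eq_sum_range (fun i => (d + 1) * d ^ i) k]
  cases k with
  | zero => simp [moore, mooreZ]
  | succ n =>
    have hmz : mooreZ d ((↑(n + 1) : ℤ) - 1) = moore d n := by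
      have : ((↑(n + 1) : ℤ) - 1) = (n : ℤ) := by push_cast; ring
      rw [this, mooreZ]
      simp
    rw [hmz]
    have hsum : ∑ i ∈ Finset.range (n + 1), (d + 1) * d ^ i
        = (∑ i ∈ Finset.range (n + 1), d ^ (i + 1)) + ∑ i ∈ Finset.range (n + 1), d ^ i := by
      rw [← Finset.sum_add_distrib]
      apply Finset.sum_congr rfl
      intros; ring
    have h1 : moore d (n + 1) = (∑ i ∈ Finset.range (n + 1), d ^ (i + 1)) + 1 := by
      rw [moore, Finset.sum_range_succ']
      simp
    rw [hsum, h1, moore]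
    omega
end

section
/- Let G be an out-regular (degree d) k-geodetic digraph of order M(d,k)+ε, so every vertex u has an outlier set O(u) of exactly ε vertices not reachable from u within distance k. Then every vertex v of in-degree less than d belongs to O(w) for some out-neighbour w of any vertex u; that is, S ⊆ ⋂_{u∈V(G)} O(N^+(u)), where S is the set of vertices of in-degree < d. -/
/-- In an out-regular degree-`d` `k`-geodetic digraph of order `M(d,k)+ε`,
every vertex `v` of in-degree `< d` is an outlier of some out-neighbour of every vertex `u`;
that is, `S ⊆ ⋂_{u} O(N⁺(u))`. -/
theorem stmt3 {V : Type*} [Fintype V] (A : V → V → Prop) (d k ε : ℕ)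
    (hgeo : IsGeodetic A k) (hout : ∀ u : V, outDeg A u = d)
    (hcard : Fintype.card V = moore d k + ε) :
    ∀ v : V, inDeg A v < d → ∀ u : V, ∃ w : V, A u w ∧ v ∈ outlier A k w := by
  intro v hv u
  by_contra hcon
  push_neg at hcon
  have hreach : ∀ w : V, A u w → reachIn A k w v := by
    intro w hw
    have := hcon w hw
    simpa [outlier, reachIn] using this
  have H : ∀ w : V, ∃ x : V, A u w →
      A x v ∧ ∃ p l : List V, p ∈ walksUpTo A k u x ∧ l ∈ walksUpTo A k w v ∧
        p ++ [v] = u :: l := by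
    intro w
    by_cases hw : A u w
    · obtain ⟨l, hl⟩ := hreach w hw
      obtain ⟨hchain, hhead, hlast, hlen⟩ := hl
      have hne : l ≠ [] := by intro h; simp [h] at hhead
      have hmchain : List.Chain' A (u :: l) := by
        unfold List.Chain'; rw [List.isChain_cons]
        exact ⟨fun y hy => by rw [hhead] at hy; cases hy; exact hw, hchain⟩
      have hmne : (u :: l) ≠ [] := by simp
      have hmlast : (u :: l).getLast hmne = v := by
        have : (u :: l).getLast? = some v := by
          rw [List.getLast?_cons, hlast]
          simp
        rwa [List.getLast?_eq_getLast hmne, Option.some_inj] at this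
      set p : List V := (u :: l).dropLast with hp
      have hsplit : p ++ [v] = u :: l := by
        rw [hp, ← hmlast]
        exact List.dropLast_append_getLast hmne
      have hpne : p ≠ [] := by
        intro h
        rw [h] at hsplit
        simp at hsplit
        exact hne hsplit.2
      set x : V := p.getLast hpne with hx
      have hpchain : List.Chain' A p ∧ A x v := by
        have := hmchain
        unfold List.Chain' at this; rw [← hsplit, List.isChain_append] at this
        refine ⟨this.1, ?_⟩
        have := this.2.2 x (by rw [List.getLast?_eq_getLast hpne]; exact rfl) v rfl
        exact this
      refine ⟨x, fun _ => ⟨hpchain.2, p, l, ⟨hpchain.1, ?_, ?_, ?_⟩,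
        ⟨hchain, hhead, hlast, hlen⟩, hsplit⟩⟩
      · obtain ⟨a, t, hat⟩ := List.exists_cons_of_ne_nil hne
        rw [hp, hat]
        simp [List.dropLast]
      · rw [List.getLast?_eq_getLast hpne]
      · have : p.length + 1 = (u :: l).length := by
          rw [← hsplit]; simp
        simp at this
        omega
    · exact ⟨u, fun h => absurd h hw⟩
  choose f hf using H
  have hmaps : ∀ w ∈ {w | A u w}, f w ∈ {x | A x v} := fun w hw => (hf w hw).1
  have hinj : Set.InjOn f {w | A u w} := by
    intro w1 h1 w2 h2 hfe
    obtain ⟨hx1, p1, l1, hp1, hl1, he1⟩ := hf w1 h1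
    obtain ⟨hx2, p2, l2, hp2, hl2, he2⟩ := hf w2 h2
    rw [hfe] at hp1
    have hpp : p1 = p2 := hgeo u (f w2) hp1 hp2
    have hll : l1 = l2 := by
      have : (u :: l1) = (u :: l2) := by rw [← he1, ← he2, hpp]
      simpa using this
    have : some w1 = some w2 := by rw [← hl1.2.1, hll, hl2.2.1]
    exact Option.some_injective _ this
  have hle : ({w | A u w} : Set V).ncard ≤ ({x | A x v} : Set V).ncard :=
    Set.ncard_le_ncard_of_injOn f hmaps hinj (Set.toFinite _)
  have h1 : d ≤ inDeg A v := by
    rw [← hout u]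
    exact hle
  omega
end

section
/- Let G be an out-regular (degree d) k-geodetic digraph of order M(d,k)+ε with outlier sets O(u) of size ε. Then every vertex v' of in-degree greater than d is an out-neighbour of some outlier of every vertex; that is, S' ⊆ ⋂_{u∈V(G)} N^+(O(u)), where S' is the set of vertices of in-degree > d. -/
section Aux

variable {V : Type*} {A : V → V → Prop} {k : ℕ}

/-- Reachability by a walk with at most `k` vertices (i.e. length at most `k-1`). -/
def shortReach (A : V → V → Prop) (k : ℕ) (w x : V) : Prop :=
  ∃ l : List V, l.Chain' A ∧ l.head? = some w ∧ l.getLast? = some x ∧ l.length ≤ k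

lemma shortReach.toWalk {w x v' : V} (h : shortReach A k w x) (hx : A x v') :
    (h.choose ++ [v']) ∈ walksUpTo A k w v' ∧ (h.choose ++ [v']).length = h.choose.length + 1 := by
  obtain ⟨c, hh, hl, hn⟩ := h.choose_spec
  refine ⟨⟨?_, ?_, ?_, ?_⟩, by simp⟩
  · refine c.append (List.isChain_singleton v') ?_
    intro a ha b hb
    simp only [List.head?_cons, Option.mem_def, Option.some.injEq] at hb
    rw [hl] at ha
    simp only [Option.mem_def, Option.some.injEq] at ha
    subst ha; subst hb; exact hx
  · obtain ⟨a, t, hc⟩ : ∃ a t, h.choose = a :: t := by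
      cases hc : h.choose with
      | nil => rw [hc] at hh; simp at hh
      | cons a t => exact ⟨a, t, rfl⟩
    rw [hc] at hh ⊢
    simpa using hh
  · simp
  · simp; omega

/-- Key uniqueness lemma: two in-neighbours of `v'` both reachable from `w` by short
walks coincide. -/
lemma key (hgeo : IsGeodetic A k) {v' w x₁ x₂ : V}
    (h1 : shortReach A k w x₁) (h2 : shortReach A k w x₂)
    (a1 : A x₁ v') (a2 : A x₂ v') : x₁ = x₂ := by
  have m1 := h1.toWalk a1
  have m2 := h2.toWalk a2
  have heq := hgeo w v' m1.1 m2.1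
  have : h1.choose = h2.choose := List.append_cancel_right heq
  have e1 := h1.choose_spec.2.2.1
  have e2 := h2.choose_spec.2.2.1
  rw [this, e2] at e1
  exact (Option.some.injEq _ _ ▸ e1).symm

end Aux

/-- In an out-regular degree-`d` `k`-geodetic digraph of order `M(d,k)+ε`,
every vertex `v'` of in-degree `> d` is an out-neighbour of some outlier of every vertex;
that is, `S' ⊆ ⋂_{u} N⁺(O(u))`. -/
theorem stmt4 {V : Type*} [Fintype V] (A : V → V → Prop) (d k ε : ℕ)
    (hgeo : IsGeodetic A k) (hout : ∀ u : V, outDeg A u = d)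
    (hcard : Fintype.card V = moore d k + ε) :
    ∀ v' : V, d < inDeg A v' → ∀ u : V, ∃ x : V, x ∈ outlier A k u ∧ A x v' := by
  intro v' hdeg u
  by_contra hcon
  push_neg at hcon
  have hreach : ∀ x : V, A x v' → reachIn A k u x := by
    intro x hx
    by_contra hr
    exact hcon x hr hx
  have hW : {w : V | A u w}.ncard = d := hout u
  have hS : d < {x : V | A x v'}.ncard := hdeg
  rcases Nat.eq_zero_or_pos k with hk | hk
  · -- k = 0 : every reachable vertex is u itself
    subst hk
    have hsub : {x : V | A x v'} ⊆ {u} := by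
      intro x hx
      obtain ⟨l, hc, hh, hl, hn⟩ := hreach x hx
      match l, hh, hl, hn with
      | [a], hh, hl, _ =>
        simp only [List.head?_cons, Option.some.injEq] at hh
        simp only [List.getLast?_singleton, Option.some.injEq] at hl
        simp [← hh, ← hl]
    have h1 : {x : V | A x v'}.ncard ≤ 1 := by
      simpa using Set.ncard_le_ncard hsub (Set.finite_singleton u)
    have hd0 : d = 0 := by omega
    have hne : {x : V | A x v'}.Nonempty := by
      rw [Set.nonempty_iff_ne_empty]
      intro he
      rw [he] at hS
      simp at hS
    obtain ⟨x, hx⟩ := hne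
    have hxu : x = u := hsub hx
    subst hxu
    have : v' ∈ {w : V | A x w} := hx
    have : 0 < {w : V | A x w}.ncard := (Set.ncard_pos (Set.toFinite _)).mpr ⟨v', this⟩
    omega
  · -- k ≥ 1
    -- every non-short in-neighbour has a walk of length exactly k+1
    have hlong : ∀ x : V, A x v' → ¬ shortReach A k u x →
        ∃ l : List V, l.Chain' A ∧ l.head? = some u ∧ l.getLast? = some x ∧
          l.length = k + 1 := by
      intro x hx hns
      obtain ⟨l, hc, hh, hl, hn⟩ := hreach x hx
      refine ⟨l, hc, hh, hl, ?_⟩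
      rcases Nat.lt_or_ge l.length (k + 1) with h | h
      · exact absurd ⟨l, hc, hh, hl, by omega⟩ hns
      · omega
    -- second-vertex function for long in-neighbours
    have hsec : ∀ x : V, ∃ w : V, (A x v' ∧ ¬ shortReach A k u x) →
        A u w ∧ shortReach A k w x := by
      intro x
      by_cases h : A x v' ∧ ¬ shortReach A k u x
      · obtain ⟨l, hc, hh, hl, hn⟩ := hlong x h.1 h.2
        match l, hc, hh, hl, hn with
        | a :: b :: r, hc, hh, hl, hn =>
          simp only [List.head?_cons, Option.some.injEq] at hh
          subst hh
          rw [List.getLast?_cons_cons] at hl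
          rw [show List.Chain' A (a :: b :: r) = List.IsChain A (a :: b :: r) from rfl, List.isChain_cons_cons] at hc
          refine ⟨b, fun _ => ⟨hc.1, b :: r, hc.2, rfl, hl, ?_⟩⟩
          simp only [List.length_cons] at hn ⊢
          omega
        | [a], hc, hh, hl, hn =>
          simp only [List.length_cons, List.length_nil] at hn
          omega
      · exact ⟨u, fun hx => absurd hx h⟩
    choose f hf using hsec
    by_cases hp : ∃ p : V, A p v' ∧ shortReach A k u p
    · -- there is a (unique) short in-neighbour p
      obtain ⟨p, hpS, hpshort⟩ := hp
      have huniq : ∀ x : V, A x v' → shortReach A k u x → x = p := by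
        intro x hx hs
        exact key hgeo hs hpshort hx hpS
      obtain ⟨lp, cp, hph, hpl, hpn⟩ := hpshort
      -- determine the bad slot w*
      have hbad : ∃ w' : V, A u w' ∧
          ∀ x : V, A x v' → ¬ shortReach A k u x → f x ≠ w' := by
        match lp, cp, hph, hpl, hpn with
        | [a], cp, hph, hpl, hpn =>
          -- p = u, so A u v'; the bad slot is v' itself
          simp only [List.head?_cons, Option.some.injEq] at hph
          simp only [List.getLast?_singleton, Option.some.injEq] at hpl
          have hpu : p = u := by rw [← hpl, hph]
          refine ⟨v', hpu ▸ hpS, ?_⟩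
          intro x hx hlx heq
          have hfx := (hf x ⟨hx, hlx⟩).2
          rw [heq] at hfx
          -- a short walk from v' to x, extended by v', contradicts geodecity with [v']
          have hm := hfx.toWalk hx
          have hm2 : [v'] ∈ walksUpTo A k v' v' := by
            refine ⟨List.isChain_singleton v', rfl, rfl, by simp⟩
          have := hgeo v' v' hm.1 hm2
          obtain ⟨c, hh, hl, hn⟩ := hfx.choose_spec
          have : hfx.choose = [] := by
            have hlen := congrArg List.length this
            simp only [List.length_append, List.length_singleton] at hlen
            exact List.length_eq_zero_iff.mp (by omega)
          rw [this] at hh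
          simp at hh
        | a :: b :: r, cp, hph, hpl, hpn =>
          -- p ≠ u; the bad slot is the second vertex b of p's walk
          simp only [List.head?_cons, Option.some.injEq] at hph
          subst hph
          rw [List.getLast?_cons_cons] at hpl
          rw [show List.Chain' A (a :: b :: r) = List.IsChain A (a :: b :: r) from rfl, List.isChain_cons_cons] at cp
          have hshortb : shortReach A k b p := by
            refine ⟨b :: r, cp.2, rfl, hpl, ?_⟩
            simp only [List.length_cons] at hpn ⊢
            omega
          refine ⟨b, cp.1, ?_⟩
          intro x hx hlx heq
          have hfx := (hf x ⟨hx, hlx⟩).2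
          rw [heq] at hfx
          have : x = p := key hgeo hfx hshortb hx hpS
          subst this
          exact hlx ⟨a :: b :: r, List.isChain_cons_cons.mpr cp, rfl, by
            rw [List.getLast?_cons_cons]; exact hpl, hpn⟩
      obtain ⟨w', hw'W, hw'miss⟩ := hbad
      have hw'W' : w' ∈ {w : V | A u w} := hw'W
      have hpS' : p ∈ {x : V | A x v'} := hpS
      -- injection from S \ {p} into W \ {w'}
      have hmaps : ∀ x ∈ {x : V | A x v'} \ {p}, f x ∈ {w : V | A u w} \ {w'} := by
        rintro x ⟨hx, hxp⟩
        have hnl : ¬ shortReach A k u x := fun hs => hxp (huniq x hx hs)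
        exact ⟨(hf x ⟨hx, hnl⟩).1, hw'miss x hx hnl⟩
      have hinj : Set.InjOn f ({x : V | A x v'} \ {p}) := by
        rintro x₁ ⟨hx₁, hx₁p⟩ x₂ ⟨hx₂, hx₂p⟩ hfe
        have hn₁ : ¬ shortReach A k u x₁ := fun hs => hx₁p (huniq x₁ hx₁ hs)
        have hn₂ : ¬ shortReach A k u x₂ := fun hs => hx₂p (huniq x₂ hx₂ hs)
        have h₁ := (hf x₁ ⟨hx₁, hn₁⟩).2
        have h₂ := (hf x₂ ⟨hx₂, hn₂⟩).2
        rw [hfe] at h₁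
        exact key hgeo h₁ h₂ hx₁ hx₂
      have hle := Set.ncard_le_ncard_of_injOn f hmaps hinj (Set.toFinite _)
      have hT : ({x : V | A x v'} \ {p}).ncard = {x : V | A x v'}.ncard - 1 :=
        Set.ncard_diff_singleton_of_mem hpS'
      have hW' : ({w : V | A u w} \ {w'}).ncard = d - 1 := by
        rw [Set.ncard_diff_singleton_of_mem hw'W', hW]
      have hd1 : 0 < d := by
        have : 0 < {w : V | A u w}.ncard := (Set.ncard_pos (Set.toFinite _)).mpr ⟨w', hw'W⟩
        omega
      omega
    · -- no short in-neighbour: injection from S into W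
      push_neg at hp
      have hmaps : ∀ x ∈ {x : V | A x v'}, f x ∈ {w : V | A u w} := by
        intro x hx
        exact (hf x ⟨hx, hp x hx⟩).1
      have hinj : Set.InjOn f {x : V | A x v'} := by
        intro x₁ hx₁ x₂ hx₂ hfe
        have h₁ := (hf x₁ ⟨hx₁, hp x₁ hx₁⟩).2
        have h₂ := (hf x₂ ⟨hx₂, hp x₂ hx₂⟩).2
        rw [hfe] at h₁
        exact key hgeo h₁ h₂ hx₁ hx₂
      have hle := Set.ncard_le_ncard_of_injOn f hmaps hinj (Set.toFinite _)
      omega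
end

section
/- In an out-regular degree-d k-geodetic digraph of order M(d,k)+ε, every vertex v' with in-degree greater than d satisfies d+1 ≤ d^-(v') ≤ d+ε. -/
section Aux

open List Set

variable {V : Type*} [Fintype V] {A : V → V → Prop} {d : ℕ}

def Wk (A : V → V → Prop) (u : V) (n : ℕ) : Set (List V) :=
  {l | l.Chain' A ∧ l.head? = some u ∧ l.length = n + 1}

lemma wk_finite (A : V → V → Prop) (u : V) (n : ℕ) : (Wk A u n).Finite :=
  (List.finite_length_eq V (n + 1)).subset fun _ hl => hl.2.2

lemma wk_card (hout : ∀ u : V, outDeg A u = d) (u : V) (n : ℕ) :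
    (Wk A u n).ncard = d ^ n := by
  classical
  induction n with
  | zero =>
    have h : Wk A u 0 = {[u]} := by
      ext l
      constructor
      · rintro ⟨-, h2, h3⟩
        obtain ⟨a, rfl⟩ := List.length_eq_one_iff.mp h3
        simp_all [Wk]
      · rintro rfl
        exact ⟨List.isChain_singleton _, by simp, by simp⟩
    simp [h]
  | succ n ih =>
    set s := (wk_finite A u (n + 1)).toFinset with hs
    set t := (wk_finite A u n).toFinset with ht
    have hmem_s : ∀ l, l ∈ s ↔ l ∈ Wk A u (n+1) := fun l => Set.Finite.mem_toFinset _
    have hmem_t : ∀ l, l ∈ t ↔ l ∈ Wk A u n := fun l => Set.Finite.mem_toFinset _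
    have hmap : ∀ l ∈ s, l.dropLast ∈ t := by
      intro l hl
      rw [hmem_s] at hl
      obtain ⟨h1, h2, h3⟩ := hl
      rw [hmem_t]
      refine ⟨h1.prefix l.dropLast_prefix, ?_, by simp [h3]⟩
      obtain ⟨a, b, r, rfl⟩ : ∃ a b r, l = a :: b :: r := by
        match l, h3 with
        | a :: b :: r, _ => exact ⟨a, b, r, rfl⟩
      simpa using h2
    rw [Set.ncard_eq_toFinset_card _ (wk_finite A u (n+1)), ← hs]
    rw [Finset.card_eq_sum_card_fiberwise hmap]
    have hfib : ∀ l₀ ∈ t, (s.filter (fun l => l.dropLast = l₀)).card = d := by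
      intro l₀ hl₀
      rw [hmem_t] at hl₀
      obtain ⟨hc0, hh0, hl0len⟩ := hl₀
      have hne0 : l₀ ≠ [] := by intro h; simp [h] at hl0len
      obtain ⟨w, hw⟩ : ∃ w, l₀.getLast? = some w := by
        cases h : l₀.getLast? with
        | none => exact absurd (List.getLast?_eq_none_iff.mp h) hne0
        | some w => exact ⟨w, rfl⟩
      have hNfin : {v | A w v}.Finite := Set.toFinite _
      have hNcard : hNfin.toFinset.card = d := by
        rw [← Set.ncard_eq_toFinset_card _ hNfin]; exact hout w
      rw [← hNcard]
      apply Finset.card_bij (fun l _ => l.getLast?.getD w)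
      · -- maps into
        intro l hl
        simp only [Finset.mem_filter] at hl
        obtain ⟨hls, hdrop⟩ := hl
        rw [hmem_s] at hls
        obtain ⟨h1, h2, h3⟩ := hls
        have hne : l ≠ [] := by intro h; simp [h] at h3
        obtain ⟨v, hv⟩ : ∃ v, l.getLast? = some v := by
          cases h : l.getLast? with
          | none => exact absurd (List.getLast?_eq_none_iff.mp h) hne
          | some v => exact ⟨v, rfl⟩
        have hl_eq : l₀ ++ [v] = l := by
          rw [← hdrop]; exact List.dropLast_append_getLast? v hv
        have : A w v := by
          have := List.isChain_append.mp (hl_eq ▸ h1)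
          exact this.2.2 w hw v rfl
        simp [hv, Set.Finite.mem_toFinset, this]
      · -- injective
        intro l hl l' hl' heq
        simp only [Finset.mem_filter] at hl hl'
        obtain ⟨hls, hdrop⟩ := hl
        obtain ⟨hls', hdrop'⟩ := hl'
        rw [hmem_s] at hls hls'
        have hne : l ≠ [] := by intro h; have := hls.2.2; simp [h] at this
        have hne' : l' ≠ [] := by intro h; have := hls'.2.2; simp [h] at this
        obtain ⟨v, hv⟩ : ∃ v, l.getLast? = some v := by
          cases h : l.getLast? with
          | none => exact absurd (List.getLast?_eq_none_iff.mp h) hne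
          | some v => exact ⟨v, rfl⟩
        obtain ⟨v', hv'⟩ : ∃ v', l'.getLast? = some v' := by
          cases h : l'.getLast? with
          | none => exact absurd (List.getLast?_eq_none_iff.mp h) hne'
          | some v => exact ⟨v, rfl⟩
        rw [← List.dropLast_append_getLast? v hv, ← List.dropLast_append_getLast? v' hv',
          hdrop, hdrop']
        simp [hv, hv'] at heq
        rw [heq]
      · -- surjective
        intro v hv
        rw [Set.Finite.mem_toFinset] at hv
        refine ⟨l₀ ++ [v], ?_, by simp⟩
        simp only [Finset.mem_filter]
        constructor
        · rw [hmem_s]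
          refine ⟨?_, ?_, by simp [hl0len]⟩
          · exact List.isChain_append.mpr ⟨hc0, List.isChain_singleton v, by
              intro x hx y hy
              simp at hy
              rw [hw] at hx
              simp at hx
              exact hx ▸ hy ▸ hv⟩
          · rw [List.head?_append_of_ne_nil _ hne0]; exact hh0
        · exact List.dropLast_concat
    rw [Finset.sum_congr rfl hfib, Finset.sum_const, smul_eq_mul]
    rw [← Set.ncard_eq_toFinset_card _ (wk_finite A u n), ih]
    ring

/-- All walks of length at most `k` starting at `u`. -/
def WalksFrom (A : V → V → Prop) (k : ℕ) (u : V) : Set (List V) :=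
  {l | l.Chain' A ∧ l.head? = some u ∧ l.length ≤ k + 1}

lemma walksFrom_finite (A : V → V → Prop) (k : ℕ) (u : V) : (WalksFrom A k u).Finite :=
  (List.finite_length_le V (k + 1)).subset fun _ hl => hl.2.2

lemma walksFrom_card {k : ℕ} (hout : ∀ u : V, outDeg A u = d) (u : V) :
    (WalksFrom A k u).ncard = ∑ i ∈ Finset.range (k + 1), d ^ i := by
  classical
  rw [Set.ncard_eq_toFinset_card _ (walksFrom_finite A k u)]
  have hsplit : (walksFrom_finite A k u).toFinset
      = (Finset.range (k + 1)).biUnion (fun n => (wk_finite A u n).toFinset) := by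
    ext l
    simp only [Set.Finite.mem_toFinset, Finset.mem_biUnion, Finset.mem_range]
    constructor
    · rintro ⟨h1, h2, h3⟩
      have hne : l ≠ [] := by intro h; simp [h] at h2
      have hpos : 1 ≤ l.length := List.length_pos_iff.mpr hne
      exact ⟨l.length - 1, by omega, h1, h2, by omega⟩
    · rintro ⟨n, hn, h1, h2, h3⟩
      exact ⟨h1, h2, by omega⟩
  rw [hsplit, Finset.card_biUnion]
  · refine Finset.sum_congr rfl fun n _ => ?_
    rw [← Set.ncard_eq_toFinset_card _ (wk_finite A u n), wk_card hout]
  · intro m _ n _ hmn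
    simp only [Finset.disjoint_left, Set.Finite.mem_toFinset]
    rintro l ⟨-, -, hm⟩ ⟨-, -, hn⟩
    omega

lemma reach_ncard {k : ℕ} (hgeo : IsGeodetic A k) (hout : ∀ u : V, outDeg A u = d) (u : V) :
    {v | reachIn A k u v}.ncard = ∑ i ∈ Finset.range (k + 1), d ^ i := by
  classical
  rw [← walksFrom_card hout u]
  have himg : List.getLast? '' (WalksFrom A k u) = some '' {v | reachIn A k u v} := by
    ext x
    simp only [Set.mem_image, Set.mem_setOf_eq]
    constructor
    · rintro ⟨l, ⟨h1, h2, h3⟩, rfl⟩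
      have hne : l ≠ [] := by intro h; simp [h] at h2
      obtain ⟨v, hv⟩ : ∃ v, l.getLast? = some v := by
        cases h : l.getLast? with
        | none => exact absurd (List.getLast?_eq_none_iff.mp h) hne
        | some v => exact ⟨v, rfl⟩
      exact ⟨v, ⟨l, h1, h2, hv, h3⟩, hv.symm⟩
    · rintro ⟨v, ⟨l, h1, h2, h3, h4⟩, rfl⟩
      exact ⟨l, ⟨h1, h2, h4⟩, h3⟩
  have hinj : Set.InjOn List.getLast? (WalksFrom A k u) := by
    rintro l ⟨h1, h2, h3⟩ l' ⟨h1', h2', h3'⟩ heq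
    have hne : l ≠ [] := by intro h; simp [h] at h2
    obtain ⟨v, hv⟩ : ∃ v, l.getLast? = some v := by
      cases h : l.getLast? with
      | none => exact absurd (List.getLast?_eq_none_iff.mp h) hne
      | some v => exact ⟨v, rfl⟩
    exact hgeo u v ⟨h1, h2, hv, h3⟩ ⟨h1', h2', heq ▸ hv, h3'⟩
  calc {v | reachIn A k u v}.ncard
      = (some '' {v | reachIn A k u v}).ncard :=
        (Set.ncard_image_of_injective _ (Option.some_injective V)).symm
    _ = (List.getLast? '' (WalksFrom A k u)).ncard := by rw [himg]
    _ = (WalksFrom A k u).ncard := Set.ncard_image_of_injOn hinj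

end Aux

/-- In an out-regular degree-`d` `k`-geodetic digraph of order `M(d,k)+ε`,
every vertex `v'` with in-degree greater than `d` satisfies `d+1 ≤ d⁻(v') ≤ d+ε`. -/
theorem stmt6 {V : Type*} [Fintype V] (A : V → V → Prop) (d k ε : ℕ)
    (hgeo : IsGeodetic A k) (hout : ∀ u : V, outDeg A u = d)
    (hcard : Fintype.card V = moore d k + ε) :
    ∀ v' : V, d < inDeg A v' → d + 1 ≤ inDeg A v' ∧ inDeg A v' ≤ d + ε := by

  classical
  intro v' hlt
  refine ⟨hlt, ?_⟩
  -- in-neighbors exist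
  have hpos : 0 < ({u | A u v'} : Set V).ncard := lt_of_le_of_lt (Nat.zero_le d) hlt
  obtain ⟨u₀, hu₀⟩ : ({u | A u v'} : Set V).Nonempty := by
    rw [← Set.ncard_pos (Set.toFinite _)]; exact hpos
  -- d ≥ 1
  have hd : 1 ≤ d := by
    by_contra h
    have hd0 : d = 0 := by omega
    have h0 := hout u₀
    unfold outDeg at h0
    rw [hd0, Set.ncard_eq_zero (Set.toFinite _)] at h0
    have : v' ∈ ({v | A u₀ v} : Set V) := hu₀
    rw [h0] at this
    exact this
  -- total count bound
  have hbig : ({u | A u v'} : Set V).ncard ≤ Nat.card V := by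
    rw [← Set.ncard_univ]; exact Set.ncard_le_ncard (Set.subset_univ _) (Set.toFinite _)
  rcases Nat.eq_zero_or_pos k with hk | hk
  · -- k = 0
    subst hk
    have : Nat.card V = 1 + ε := by rw [Nat.card_eq_fintype_card, hcard]; rfl
    show inDeg A v' ≤ d + ε
    unfold inDeg
    omega
  · -- k ≥ 1
    have hreach : ({v | reachIn A k v' v} : Set V).ncard = moore d k := reach_ncard hgeo hout v'
    have houtlier : (outlier A k v').ncard = ε := by
      have hcompl : outlier A k v' = ({v | reachIn A k v' v} : Set V)ᶜ := by
        ext x; simp [outlier]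
      have := Set.ncard_add_ncard_compl ({v | reachIn A k v' v} : Set V)
      rw [hreach, Nat.card_eq_fintype_card, hcard] at this
      rw [hcompl]
      omega
    -- the set of in-neighbors reachable from v' within k
    set R : Set V := {u | A u v' ∧ reachIn A k v' u} with hR
    have hkey : ∀ u ∈ R, ∃ c t, (v' :: c :: t) ∈ walksUpTo A k v' u := by
      rintro u ⟨huv, l, hl⟩
      obtain ⟨h1, h2, h3, h4⟩ := hl
      obtain ⟨t₀, rfl⟩ : ∃ t₀, l = v' :: t₀ := by
        cases l with
        | nil => simp at h2
        | cons a t₀ => exact ⟨t₀, by simp at h2; rw [h2]⟩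
      cases t₀ with
      | nil =>
        exfalso
        have huv' : u = v' := (by simpa using h3 : v' = u).symm
        subst huv'
        have hw1 : [u] ∈ walksUpTo A k u u := ⟨List.isChain_singleton _, by simp, by simp, by omega⟩
        have hw2 : [u, u] ∈ walksUpTo A k u u :=
          ⟨List.isChain_pair.mpr huv, by simp, by simp, by simp; omega⟩
        have := hgeo u u hw1 hw2
        simp at this
      | cons c t => exact ⟨c, t, h1, h2, h3, h4⟩
    -- the map sending each reachable in-neighbor to the second vertex of the walk
    have hRle : R.ncard ≤ d := by
      set f : V → V := fun u =>
        if h : ∃ c t, (v' :: c :: t) ∈ walksUpTo A k v' u then h.choose else v' with hf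
      have hspec : ∀ u ∈ R, ∃ t, (v' :: f u :: t) ∈ walksUpTo A k v' u := by
        intro u hu
        have h := hkey u hu
        rw [hf]
        simp only [h, dif_pos]
        exact h.choose_spec
      have hmaps : ∀ u ∈ R, f u ∈ ({c | A v' c} : Set V) := by
        intro u hu
        obtain ⟨t, h1, -, -, -⟩ := hspec u hu
        exact (List.isChain_cons_cons.mp h1).1
      have hinj : Set.InjOn f R := by
        intro u hu u' hu' heq
        obtain ⟨t, hw⟩ := hspec u hu
        obtain ⟨t', hw'⟩ := hspec u' hu'
        rw [heq] at hw
        set c := f u' with hc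
        obtain ⟨h1, h2, h3, h4⟩ := hw
        obtain ⟨h1', h2', h3', h4'⟩ := hw'
        -- build walks from c to v'
        have hlast : (c :: t).getLast? = some u := by
          rw [← List.getLast?_cons_cons (a := v')]; exact h3
        have hlast' : (c :: t').getLast? = some u' := by
          rw [← List.getLast?_cons_cons (a := v')]; exact h3'
        have hwalk : ((c :: t) ++ [v']) ∈ walksUpTo A k c v' := by
          refine ⟨?_, ?_, ?_, ?_⟩
          · refine List.isChain_append.mpr ⟨h1.tail, List.isChain_singleton _, ?_⟩
            intro x hx y hy
            rw [hlast] at hx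
            simp at hx hy
            rw [← hx, ← hy]
            exact hu.1
          · rw [List.head?_append_of_ne_nil _ (List.cons_ne_nil _ _)]; simp
          · exact List.getLast?_concat
          · simp at h4 ⊢; omega
        have hwalk' : ((c :: t') ++ [v']) ∈ walksUpTo A k c v' := by
          refine ⟨?_, ?_, ?_, ?_⟩
          · refine List.isChain_append.mpr ⟨h1'.tail, List.isChain_singleton _, ?_⟩
            intro x hx y hy
            rw [hlast'] at hx
            simp at hx hy
            rw [← hx, ← hy]
            exact hu'.1
          · rw [List.head?_append_of_ne_nil _ (List.cons_ne_nil _ _)]; simp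
          · exact List.getLast?_concat
          · simp at h4' ⊢; omega
        have heql := hgeo c v' hwalk hwalk'
        have : (c :: t) = (c :: t') := List.append_cancel_right heql
        rw [this] at hlast
        rw [hlast'] at hlast
        exact (by simpa using hlast : u' = u).symm
      calc R.ncard ≤ ({c | A v' c} : Set V).ncard :=
            Set.ncard_le_ncard_of_injOn f hmaps hinj (Set.toFinite _)
        _ = d := hout v'
    -- combine
    have hsub : ({u | A u v'} : Set V) ⊆ R ∪ outlier A k v' := by
      intro u hu
      by_cases h : reachIn A k v' u
      · exact Or.inl ⟨hu, h⟩
      · exact Or.inr h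
    calc inDeg A v' = ({u | A u v'} : Set V).ncard := rfl
      _ ≤ (R ∪ outlier A k v').ncard := Set.ncard_le_ncard hsub (Set.toFinite _)
      _ ≤ R.ncard + (outlier A k v').ncard := Set.ncard_union_le _ _
      _ ≤ d + ε := by rw [houtlier]; omega
end

section
/- Let G be an out-regular degree-d k-geodetic digraph of order M(d,k)+ε. If some vertex v' has in-degree exactly d+ε, then for every vertex u, the outlier set O(u) is contained in N^-(v'). -/
/- ### Auxiliary development -/

open Classical in
/-- Out-neighbourhood of an optional vertex, as a Finset. -/
noncomputable def nbrF {V : Type*} [Fintype V] (A : V → V → Prop) (o : Option V) : Finset V :=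
  o.elim ∅ (fun h => Finset.univ.filter (fun x => A h x))

open Classical in
/-- Reversed walks of length exactly `n` ending (in reversed order, starting) at `u`. -/
noncomputable def rW {V : Type*} [Fintype V] (A : V → V → Prop) (u : V) : ℕ → Finset (List V)
  | 0 => {[u]}
  | (n+1) => (rW A u n).biUnion (fun l => (nbrF A l.head?).image (fun x => x :: l))

lemma rW_spec {V : Type*} [Fintype V] (A : V → V → Prop) (u : V) :
    ∀ n, ∀ l ∈ rW A u n, l.length = n + 1 ∧ l.getLast? = some u ∧ l.Chain' (flip A) := by
  intro n
  induction n with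
  | zero =>
    intro l hl
    simp only [rW, Finset.mem_singleton] at hl
    subst hl
    exact ⟨rfl, rfl, List.isChain_singleton u⟩
  | succ n ih =>
    intro l hl
    simp only [rW, Finset.mem_biUnion, Finset.mem_image] at hl
    obtain ⟨l', hl', x, hx, rfl⟩ := hl
    obtain ⟨hlen, hlast, hchain⟩ := ih l' hl'
    have hne : l' ≠ [] := by
      intro h; rw [h] at hlen; simp at hlen
    obtain ⟨h, t, rfl⟩ := List.exists_cons_of_ne_nil hne
    simp only [List.head?_cons, nbrF, Option.elim, Finset.mem_filter] at hx
    refine ⟨by simpa using hlen, ?_, ?_⟩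
    · rw [List.getLast?_cons_cons]; exact hlast
    · exact List.isChain_cons_cons.mpr ⟨hx.2, hchain⟩

lemma nbrF_card {V : Type*} [Fintype V] (A : V → V → Prop) {d : ℕ}
    (hout : ∀ w, outDeg A w = d) (h : V) : (nbrF A (some h)).card = d := by
  have hd := hout h
  rw [outDeg] at hd
  rw [← hd, ← Set.ncard_coe_finset]
  congr 1
  ext x
  simp [nbrF]

lemma rW_card {V : Type*} [Fintype V] (A : V → V → Prop) {d : ℕ}
    (hout : ∀ w, outDeg A w = d) (u : V) :
    ∀ n, (rW A u n).card = d ^ n := by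
  intro n
  induction n with
  | zero => simp [rW]
  | succ n ih =>
    classical
    have hdisj : ∀ l₁ ∈ rW A u n, ∀ l₂ ∈ rW A u n, l₁ ≠ l₂ →
        Disjoint ((nbrF A l₁.head?).image (fun x => x :: l₁))
          ((nbrF A l₂.head?).image (fun x => x :: l₂)) := by
      intro l₁ _ l₂ _ hne
      simp only [Finset.disjoint_left, Finset.mem_image]
      rintro a ⟨x, _, rfl⟩ ⟨y, _, heq⟩
      injection heq with _ h
      exact hne h.symm
    have hcong : ∀ l ∈ rW A u n,
        ((nbrF A l.head?).image (fun x => x :: l)).card = d := by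
      intro l hl
      have hinj : Function.Injective (fun x : V => x :: l) := by
        intro a b hab; injection hab
      rw [Finset.card_image_of_injective _ hinj]
      have hne : l ≠ [] := by
        intro h
        have := (rW_spec A u n l hl).1
        rw [h] at this; simp at this
      obtain ⟨h, t, rfl⟩ := List.exists_cons_of_ne_nil hne
      simpa using nbrF_card A hout h
    rw [rW, Finset.card_biUnion hdisj, Finset.sum_congr rfl hcong, Finset.sum_const, ih,
      smul_eq_mul, pow_succ]

open Classical in
/-- All reversed walks of length at most `k` starting (in walk order) at `u`. -/
noncomputable def WF {V : Type*} [Fintype V] (A : V → V → Prop) (u : V) (k : ℕ) :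
    Finset (List V) :=
  (Finset.range (k+1)).biUnion (rW A u)

lemma WF_card {V : Type*} [Fintype V] (A : V → V → Prop) {d : ℕ}
    (hout : ∀ w, outDeg A w = d) (u : V) (k : ℕ) : (WF A u k).card = moore d k := by
  classical
  have hdisj : ∀ m ∈ Finset.range (k+1), ∀ n ∈ Finset.range (k+1), m ≠ n →
      Disjoint (rW A u m) (rW A u n) := by
    intro m _ n _ hmn
    simp only [Finset.disjoint_left]
    intro l hlm hln
    have h1 := (rW_spec A u m l hlm).1
    have h2 := (rW_spec A u n l hln).1
    omega
  rw [WF, Finset.card_biUnion hdisj, moore]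
  exact Finset.sum_congr rfl (fun n _ => rW_card A hout u n)

lemma WF_walk {V : Type*} [Fintype V] (A : V → V → Prop) (u : V) (k : ℕ) {l : List V}
    (hl : l ∈ WF A u k) : l.reverse ∈ walksUpTo A k u (l.headD u) := by
  simp only [WF, Finset.mem_biUnion, Finset.mem_range] at hl
  obtain ⟨n, hn, hl⟩ := hl
  obtain ⟨hlen, hlast, hchain⟩ := rW_spec A u n l hl
  have hne : l ≠ [] := by intro h; rw [h] at hlen; simp at hlen
  obtain ⟨h, t, rfl⟩ := List.exists_cons_of_ne_nil hne
  refine ⟨List.isChain_reverse.mpr hchain, ?_, ?_, ?_⟩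
  · rw [List.head?_reverse]; exact hlast
  · rw [List.getLast?_reverse]; simp
  · simp only [List.length_reverse]
    simp only [List.length_cons] at hlen ⊢
    omega

/-- In an out-regular degree-`d` `k`-geodetic digraph of order `M(d,k)+ε`,
if some vertex `v'` has in-degree exactly `d+ε`, then every outlier set is contained in
`N⁻(v')`. -/
theorem stmt8 {V : Type*} [Fintype V] (A : V → V → Prop) (d k ε : ℕ)
    (hgeo : IsGeodetic A k) (hout : ∀ u : V, outDeg A u = d)
    (hcard : Fintype.card V = moore d k + ε)
    (v' : V) (hv' : inDeg A v' = d + ε) :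
    ∀ u : V, outlier A k u ⊆ {v : V | A v v'} := by
  classical
  intro u z hz
  set R : Set V := {v | reachIn A k u v} with hRdef
  -- Step 1: moore d k ≤ R.ncard
  have hmoore : moore d k ≤ R.ncard := by
    have hinj : Set.InjOn (fun l : List V => l.headD u) (WF A u k : Set (List V)) := by
      intro l₁ hl₁ l₂ hl₂ hhd
      replace hhd : l₁.headD u = l₂.headD u := hhd
      have w₁ := WF_walk A u k hl₁
      have w₂ := WF_walk A u k hl₂
      rw [hhd] at w₁
      have := hgeo u (l₂.headD u) w₁ w₂
      exact List.reverse_injective this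
    have himg : ((WF A u k).image (fun l : List V => l.headD u)) ⊆ R.toFinset := by
      intro v hv
      simp only [Finset.mem_image] at hv
      obtain ⟨l, hl, rfl⟩ := hv
      rw [Set.mem_toFinset]
      exact ⟨l.reverse, WF_walk A u k hl⟩
    calc moore d k = (WF A u k).card := (WF_card A hout u k).symm
      _ = ((WF A u k).image (fun l : List V => l.headD u)).card :=
          (Finset.card_image_of_injOn hinj).symm
      _ ≤ R.toFinset.card := Finset.card_le_card himg
      _ = R.ncard := by rw [Set.ncard_eq_toFinset_card']
  -- Step 2: (outlier A k u).ncard ≤ ε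
  have hOcompl : outlier A k u = Rᶜ := rfl
  have hsum : R.ncard + Rᶜ.ncard = moore d k + ε := by
    rw [Set.ncard_add_ncard_compl R, Nat.card_eq_fintype_card, hcard]
  have hO : (outlier A k u).ncard ≤ ε := by
    rw [hOcompl]; omega
  -- Step 3: S := in-neighbours of v' reachable from u; |S| ≤ d
  set S : Set V := {w | A w v'} ∩ R with hSdef
  -- walk selection
  have hwalk : ∀ w ∈ R, ∃ t : List V, (u :: t) ∈ walksUpTo A k u w := by
    intro w hw
    obtain ⟨l, hl⟩ := hw
    obtain ⟨hc, hh, hlast, hlen⟩ := hl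
    have hne : l ≠ [] := by intro h; rw [h] at hh; simp at hh
    obtain ⟨a, t, rfl⟩ := List.exists_cons_of_ne_nil hne
    simp only [List.head?_cons, Option.some.injEq] at hh
    subst hh
    exact ⟨t, hc, rfl, hlast, hlen⟩
  choose tl htl using hwalk
  have hext : ∀ w (hw : w ∈ R), A w v' →
      (tl w hw ++ [v']) ∈ walksUpTo A k ((tl w hw ++ [v']).headD u) v' ∧
      A u ((tl w hw ++ [v']).headD u) := by
    intro w hw hA
    obtain ⟨hc, hh, hlast, hlen⟩ := htl w hw
    have hchain : (u :: (tl w hw ++ [v'])).Chain' A := by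
      rw [show u :: (tl w hw ++ [v']) = (u :: tl w hw) ++ [v'] from rfl]
      refine List.isChain_append.mpr ?_
      refine ⟨hc, List.isChain_singleton v', ?_⟩
      intro x hx y hy
      simp only [List.head?_cons, Option.mem_def, Option.some.injEq] at hy
      rw [hlast] at hx
      simp only [Option.mem_def, Option.some.injEq] at hx
      subst hx; subst hy
      exact hA
    have hne2 : tl w hw ++ [v'] ≠ [] := by simp
    obtain ⟨b, rest, hbr⟩ := List.exists_cons_of_ne_nil hne2
    have hlenbr : (b :: rest).length = (tl w hw).length + 1 := by
      rw [← hbr]; simp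
    rw [hbr]
    simp only [List.headD_cons]
    rw [hbr] at hchain
    have hcc := List.isChain_cons.mp hchain
    refine ⟨⟨hcc.2, rfl, ?_, ?_⟩, hcc.1 b rfl⟩
    · rw [← hbr]; exact List.getLast?_concat
    · simp only [List.length_cons] at hlen hlenbr ⊢
      omega
  -- injectivity gives S.ncard ≤ d
  have hS : S.ncard ≤ d := by
    have hmaps : ∀ w ∈ S,
        (if hw : w ∈ R then (tl w hw ++ [v']).headD u else u) ∈ {x | A u x} := by
      intro w hwS
      rw [dif_pos hwS.2]
      exact (hext w hwS.2 hwS.1).2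
    have hinj : Set.InjOn
        (fun w => if hw : w ∈ R then (tl w hw ++ [v']).headD u else u) S := by
      intro w₁ hw₁ w₂ hw₂ heq
      replace heq : (if hw : w₁ ∈ R then (tl w₁ hw ++ [v']).headD u else u)
          = (if hw : w₂ ∈ R then (tl w₂ hw ++ [v']).headD u else u) := heq
      rw [dif_pos hw₁.2, dif_pos hw₂.2] at heq
      have h1 := (hext w₁ hw₁.2 hw₁.1).1
      have h2 := (hext w₂ hw₂.2 hw₂.1).1
      rw [heq] at h1
      have htls := hgeo _ v' h1 h2
      have hls : tl w₁ hw₁.2 = tl w₂ hw₂.2 := by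
        have := congrArg List.dropLast htls
        rwa [List.dropLast_concat, List.dropLast_concat] at this
      have hl1 := (htl w₁ hw₁.2).2.2.1
      have hl2 := (htl w₂ hw₂.2).2.2.1
      rw [show u :: tl w₁ hw₁.2 = u :: tl w₂ hw₂.2 from by rw [hls]] at hl1
      rw [hl1] at hl2
      exact Option.some.inj hl2
    have := Set.ncard_le_ncard_of_injOn _ hmaps hinj (Set.toFinite _)
    rwa [show {x | A u x}.ncard = d from hout u] at this
  -- Step 4: conclude
  have hNcard : ({w | A w v'} : Set V).ncard = d + ε := hv'
  have hsub : ({w | A w v'} : Set V) ⊆ S ∪ ({w | A w v'} \ R) := by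
    intro w hw
    by_cases hwR : w ∈ R
    · exact Or.inl ⟨hw, hwR⟩
    · exact Or.inr ⟨hw, hwR⟩
  have hcount : d + ε ≤ S.ncard + ({w | A w v'} \ R).ncard := by
    calc d + ε = ({w | A w v'} : Set V).ncard := hNcard.symm
      _ ≤ (S ∪ ({w | A w v'} \ R)).ncard := Set.ncard_le_ncard hsub (Set.toFinite _)
      _ ≤ S.ncard + ({w | A w v'} \ R).ncard := Set.ncard_union_le _ _
  have hdiff : ε ≤ ({w | A w v'} \ R).ncard := by omega
  have hsubO : ({w | A w v'} \ R) ⊆ outlier A k u := fun w hw => hw.2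
  have heq : ({w | A w v'} \ R) = outlier A k u :=
    Set.eq_of_subset_of_ncard_le hsubO (by omega) (Set.toFinite _)
  rw [← heq] at hz
  exact hz.1
end

section
/- Let G be an out-regular degree-2 k-geodetic digraph of order M(2,k)+2 (k ≥ 2) with in-degree sequence such that |S|=4 (four vertices of in-degree 1), and suppose some vertex v' has in-degree 4. Then S = N^-(v'), every outlier set is contained in S, and if Ω ⊂ S is an outlier set of some vertex then S − Ω is also the outlier set of some vertex. -/
namespace Aux
variable {V : Type*}


def wlist (f : V → Fin 2 → V) : V → List (Fin 2) → List V
  | u, [] => [u]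
  | u, i :: s => u :: wlist f (f u i) s

def wend (f : V → Fin 2 → V) : V → List (Fin 2) → V
  | u, [] => u
  | u, i :: s => wend f (f u i) s

@[simp] lemma wlist_length (f : V → Fin 2 → V) (u : V) (s : List (Fin 2)) :
    (wlist f u s).length = s.length + 1 := by
  induction s generalizing u with
  | nil => rfl
  | cons i s ih => simp [wlist, ih]

@[simp] lemma wlist_head? (f : V → Fin 2 → V) (u : V) (s : List (Fin 2)) :
    (wlist f u s).head? = some u := by
  cases s <;> rfl

@[simp] lemma wlist_getLast? (f : V → Fin 2 → V) (u : V) (s : List (Fin 2)) :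
    (wlist f u s).getLast? = some (wend f u s) := by
  induction s generalizing u with
  | nil => rfl
  | cons i s ih =>
    rw [wlist, wend, List.getLast?_cons, ih]
    simp

lemma wlist_chain' {A : V → V → Prop} {f : V → Fin 2 → V} (hf : ∀ u i, A u (f u i))
    (u : V) (s : List (Fin 2)) : (wlist f u s).Chain' A := by
  induction s generalizing u with
  | nil => simp [wlist, List.Chain']
  | cons i s ih =>
    rw [wlist, List.Chain', List.isChain_cons]
    exact ⟨by simp [hf], ih _⟩

lemma wlist_inj {f : V → Fin 2 → V} (hf : ∀ u, Function.Injective (f u))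
    {u : V} {s₁ s₂ : List (Fin 2)} (h : wlist f u s₁ = wlist f u s₂) : s₁ = s₂ := by
  induction s₁ generalizing u s₂ with
  | nil =>
    cases s₂ with
    | nil => rfl
    | cons j t => exact absurd (congrArg List.length h) (by simp [wlist])
  | cons i s ih =>
    cases s₂ with
    | nil => exact absurd (congrArg List.length h) (by simp [wlist])
    | cons j t =>
      rw [wlist, wlist, List.cons_eq_cons] at h
      have hhead : f u i = f u j := by
        have := congrArg List.head? h.2
        simpa using this
      have hij : i = j := hf u hhead
      subst hij
      rw [ih (hhead ▸ h.2)]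

lemma wlist_surj {A : V → V → Prop} {f : V → Fin 2 → V}
    (hsurj : ∀ u v, A u v → ∃ i, f u i = v) :
    ∀ (l : List V) (u : V), l.Chain' A → l.head? = some u → ∃ s, wlist f u s = l
  | [], u, _, h => by simp at h
  | [a], u, _, h => by
    simp at h
    exact ⟨[], by simp [wlist, h]⟩
  | a :: b :: rest, u, hc, h => by
    have ha : a = u := by simpa using h
    subst ha
    rw [List.Chain', List.isChain_cons_cons] at hc
    obtain ⟨i, hi⟩ := hsurj a b hc.1
    obtain ⟨s, hs⟩ := wlist_surj hsurj (b :: rest) b hc.2 rfl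
    exact ⟨i :: s, by rw [wlist, hi, hs]⟩

lemma wlist_mem_walks {A : V → V → Prop} {f : V → Fin 2 → V} (hf : ∀ u i, A u (f u i))
    {k : ℕ} {u : V} {s : List (Fin 2)} (hs : s.length ≤ k) :
    wlist f u s ∈ walksUpTo A k u (wend f u s) := by
  refine ⟨wlist_chain' hf u s, by simp, by simp, by simp; omega⟩

lemma reach_ncard [Fintype V] {A : V → V → Prop} {k : ℕ} (hgeo : IsGeodetic A k)
    {f : V → Fin 2 → V} (hf : ∀ u i, A u (f u i)) (hinj : ∀ u, Function.Injective (f u))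
    (hsurj : ∀ u v, A u v → ∃ i, f u i = v) (u : V) :
    {v | reachIn A k u v}.ncard = moore 2 k := by
  classical
  set F : (Σ j : Fin (k+1), (Fin (j : ℕ) → Fin 2)) → V :=
    fun p => wend f u (List.ofFn p.2) with hF
  have hmem : ∀ p : (Σ j : Fin (k+1), (Fin (j : ℕ) → Fin 2)),
      wlist f u (List.ofFn p.2) ∈ walksUpTo A k u (F p) := by
    intro p
    exact wlist_mem_walks hf (by simp; omega)
  have hFinj : Function.Injective F := by
    rintro ⟨j₁, σ₁⟩ ⟨j₂, σ₂⟩ h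
    have h1 := hmem ⟨j₁, σ₁⟩
    have h2 := hmem ⟨j₂, σ₂⟩
    rw [show F ⟨j₂, σ₂⟩ = F ⟨j₁, σ₁⟩ from h.symm] at h2
    have hl := hgeo u (F ⟨j₁, σ₁⟩) h1 h2
    have hs : List.ofFn σ₁ = List.ofFn σ₂ := wlist_inj hinj hl
    have hlen : (j₁ : ℕ) = (j₂ : ℕ) := by
      have := congrArg List.length hs
      simpa using this
    have hj : j₁ = j₂ := Fin.ext hlen
    subst hj
    have : σ₁ = σ₂ := List.ofFn_injective hs
    rw [this]
  have hrange : Set.range F = {v | reachIn A k u v} := by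
    ext v
    constructor
    · rintro ⟨p, rfl⟩
      exact ⟨_, hmem p⟩
    · rintro ⟨l, hc, hh, hlast, hlen⟩
      obtain ⟨s, hs⟩ := wlist_surj hsurj l u hc hh
      have hslen : s.length + 1 ≤ k + 1 := by
        have := congrArg List.length hs
        simp at this
        omega
      refine ⟨⟨⟨s.length, by omega⟩, fun i => s.get i⟩, ?_⟩
      have hofn : List.ofFn (fun i : Fin s.length => s.get i) = s := List.ofFn_get s
      have hlast' : (wlist f u s).getLast? = some v := by rw [hs]; exact hlast
      rw [wlist_getLast?] at hlast'
      simp only [hF, hofn]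
      exact Option.some_injective _ hlast'
  have : {v | reachIn A k u v}.ncard = Nat.card (Σ j : Fin (k+1), (Fin (j : ℕ) → Fin 2)) := by
    rw [← hrange, ← Set.image_univ, Set.ncard_image_of_injective _ hFinj, Set.ncard_univ]
  rw [this, Nat.card_eq_fintype_card, Fintype.card_sigma]
  have : ∀ j : Fin (k+1), Fintype.card (Fin (j : ℕ) → Fin 2) = 2 ^ (j : ℕ) := by
    intro j; simp [Fintype.card_fun]
  rw [Finset.sum_congr rfl (fun j _ => this j), Fin.sum_univ_eq_sum_range (fun i => 2 ^ i)]
  rfl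




lemma sub_ncard_le_one {s : Set V} (h : s.Subsingleton) : s.ncard ≤ 1 := by
  rcases h.eq_empty_or_singleton with rfl | ⟨a, rfl⟩ <;> simp

lemma penult {A : V → V → Prop} {l : List V} {s : V} (hc : l.Chain' A) (hl : 2 ≤ l.length)
    (hlast : l.getLast? = some s) :
    ∃ (l' : List V) (p : V), l = l' ++ [s] ∧ l'.getLast? = some p ∧ A p s ∧
      l'.Chain' A ∧ l'.head? = l.head? ∧ l'.length + 1 = l.length := by
  have hne : l ≠ [] := by intro h; simp [h] at hl
  have hgl : l.getLast hne = s := by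
    rw [List.getLast?_eq_getLast hne] at hlast
    exact Option.some_injective _ hlast
  have hdecomp : l = l.dropLast ++ [s] := by
    conv_lhs => rw [← List.dropLast_append_getLast hne]
    rw [hgl]
  have hdne : l.dropLast ≠ [] := by
    intro h
    have := congrArg List.length hdecomp
    simp [h] at this
    omega
  have hchain := hc
  rw [hdecomp, List.Chain', List.isChain_append] at hchain
  obtain ⟨hc', _, hjun⟩ := hchain
  have hp : l.dropLast.getLast? = some (l.dropLast.getLast hdne) :=
    List.getLast?_eq_getLast hdne
  refine ⟨l.dropLast, l.dropLast.getLast hdne, hdecomp, hp, ?_, hc', ?_, ?_⟩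
  · exact hjun _ hp _ rfl
  · conv_rhs => rw [hdecomp]
    exact (List.head?_append_of_ne_nil _ hdne).symm
  · simp only [List.length_dropLast]
    omega

lemma sibling {A : V → V → Prop} {k : ℕ} (hgeo : IsGeodetic A k) {s u u₁ u₂ : V}
    (hsub : {p | A p s}.Subsingleton) (h1 : A u u₁) (h2 : A u u₂) (hne : u₁ ≠ u₂) :
    ¬ (reachIn A k u₁ s ∧ reachIn A k u₂ s) := by
  rintro ⟨⟨l₁, hc₁, hh₁, hl₁, hlen₁⟩, ⟨l₂, hc₂, hh₂, hl₂, hlen₂⟩⟩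
  have hne₁ : l₁ ≠ [] := by intro h; simp [h] at hh₁
  have hne₂ : l₂ ≠ [] := by intro h; simp [h] at hh₂
  have hM₁ : (u :: l₁).Chain' A := by
    rw [List.Chain', List.isChain_cons]
    exact ⟨by intro y hy; rw [hh₁] at hy; exact (Option.mem_some_iff.mp hy) ▸ h1, hc₁⟩
  have hM₂ : (u :: l₂).Chain' A := by
    rw [List.Chain', List.isChain_cons]
    exact ⟨by intro y hy; rw [hh₂] at hy; exact (Option.mem_some_iff.mp hy) ▸ h2, hc₂⟩
  have hMl₁ : (u :: l₁).getLast? = some s := by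
    rw [List.getLast?_cons, hl₁]; simp [hne₁]
  have hMl₂ : (u :: l₂).getLast? = some s := by
    rw [List.getLast?_cons, hl₂]; simp [hne₂]
  have hlp₁ : 1 ≤ l₁.length := List.length_pos_iff.mpr hne₁
  have hlp₂ : 1 ≤ l₂.length := List.length_pos_iff.mpr hne₂
  obtain ⟨P₁, p₁, hd₁, hP₁last, hA₁, hPc₁, hPh₁, hPlen₁⟩ :=
    penult hM₁ (by simp only [List.length_cons]; omega) hMl₁
  obtain ⟨P₂, p₂, hd₂, hP₂last, hA₂, hPc₂, hPh₂, hPlen₂⟩ :=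
    penult hM₂ (by simp only [List.length_cons]; omega) hMl₂
  simp only [List.length_cons] at hPlen₁ hPlen₂
  have hpp : p₁ = p₂ := hsub hA₁ hA₂
  subst hpp
  have hw₁ : P₁ ∈ walksUpTo A k u p₁ := by
    refine ⟨hPc₁, by rw [hPh₁]; rfl, hP₁last, by omega⟩
  have hw₂ : P₂ ∈ walksUpTo A k u p₁ := by
    refine ⟨hPc₂, by rw [hPh₂]; rfl, hP₂last, by omega⟩
  have hPP := hgeo u p₁ hw₁ hw₂
  have : u :: l₁ = u :: l₂ := by rw [hd₁, hd₂, hPP]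
  have hll : l₁ = l₂ := by injection this
  apply hne
  have : l₁.head? = l₂.head? := by rw [hll]
  rw [hh₁, hh₂] at this
  exact Option.some_injective _ this

lemma width {A : V → V → Prop} {k : ℕ} (hk : 1 ≤ k) (hgeo : IsGeodetic A k) (w v' : V) :
    {t | A t v' ∧ reachIn A (k-1) w t}.Subsingleton := by
  rintro t₁ ⟨hA₁, l₁, hc₁, hh₁, hl₁, hlen₁⟩ t₂ ⟨hA₂, l₂, hc₂, hh₂, hl₂, hlen₂⟩
  have hne₁ : l₁ ≠ [] := by intro h; simp [h] at hh₁
  have hne₂ : l₂ ≠ [] := by intro h; simp [h] at hh₂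
  have hw₁ : l₁ ++ [v'] ∈ walksUpTo A k w v' := by
    refine ⟨?_, ?_, List.getLast?_concat, by simp; omega⟩
    · rw [List.Chain', List.isChain_append]
      refine ⟨hc₁, by simp, ?_⟩
      intro x hx y hy
      rw [hl₁] at hx
      simp at hx hy
      rw [← hx, ← hy]; exact hA₁
    · rw [List.head?_append_of_ne_nil _ hne₁, hh₁]
  have hw₂ : l₂ ++ [v'] ∈ walksUpTo A k w v' := by
    refine ⟨?_, ?_, List.getLast?_concat, by simp; omega⟩
    · rw [List.Chain', List.isChain_append]
      refine ⟨hc₂, by simp, ?_⟩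
      intro x hx y hy
      rw [hl₂] at hx
      simp at hx hy
      rw [← hx, ← hy]; exact hA₂
    · rw [List.head?_append_of_ne_nil _ hne₂, hh₂]
  have := hgeo w v' hw₁ hw₂
  have hll : l₁ = l₂ := List.append_cancel_right this
  rw [hll] at hl₁
  rw [hl₁] at hl₂
  exact Option.some_injective _ hl₂

lemma split {A : V → V → Prop} {k : ℕ} (hk : 1 ≤ k) {u t : V} (h : reachIn A k u t) :
    t = u ∨ ∃ w, A u w ∧ reachIn A (k-1) w t := by
  obtain ⟨l, hc, hh, hl, hlen⟩ := h
  match l, hh with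
  | [a], hh =>
    left
    have ha : a = u := by simpa using hh
    have : a = t := by simpa using hl
    rw [← this, ha]
  | a :: b :: rest, hh => 
    right
    have ha : a = u := by simpa using hh
    subst ha
    rw [List.Chain', List.isChain_cons_cons] at hc
    refine ⟨b, hc.1, ⟨b :: rest, hc.2, rfl, by simpa using hl, by simp at hlen ⊢; omega⟩⟩


end Aux

/-- Let `G` be an out-regular degree-2 `k`-geodetic digraph of order
`M(2,k)+2` (`k ≥ 2`) with `|S| = 4`, where `S` is the set of vertices of in-degree `< 2`,
and suppose some `v'` has in-degree 4.  Then `S = N⁻(v')`, every outlier set is contained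
in `S`, and if `Ω ⊆ S` is an outlier set of some vertex then `S − Ω` is also an outlier
set of some vertex. -/
theorem stmt9 {V : Type*} [Fintype V] (A : V → V → Prop) (k : ℕ) (hk : 2 ≤ k)
    (hgeo : IsGeodetic A k) (hout : ∀ u : V, outDeg A u = 2)
    (hcard : Fintype.card V = moore 2 k + 2)
    (hS : {v : V | inDeg A v < 2}.ncard = 4)
    (v' : V) (hv' : inDeg A v' = 4) :
    {v : V | inDeg A v < 2} = {v : V | A v v'} ∧
    (∀ u : V, outlier A k u ⊆ {v : V | inDeg A v < 2}) ∧
    (∀ u : V, ∃ w : V, outlier A k w = {v : V | inDeg A v < 2} \ outlier A k u) := by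
  classical
  set S := {v : V | inDeg A v < 2} with hSdef
  have hpair : ∀ u : V, ∃ p : V × V, p.1 ≠ p.2 ∧ {v | A u v} = {p.1, p.2} := by
    intro u
    have h := hout u
    rw [outDeg, Set.ncard_eq_two] at h
    obtain ⟨a, b, hab, hset⟩ := h
    exact ⟨(a, b), hab, hset⟩
  choose g hg1 hg2 using hpair
  set f : V → Fin 2 → V := fun u i => if i = 0 then (g u).1 else (g u).2 with hfdef
  have hf : ∀ u i, A u (f u i) := by
    intro u i
    have h1 : (g u).1 ∈ {v | A u v} := by rw [hg2]; left; rfl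
    have h2 : (g u).2 ∈ {v | A u v} := by rw [hg2]; right; rfl
    by_cases hi : i = 0
    · have he : f u i = (g u).1 := by simp [hfdef, hi]
      rw [he]; exact h1
    · have he : f u i = (g u).2 := by simp [hfdef, hi]
      rw [he]; exact h2
  have hne01 : ∀ u : V, f u 0 ≠ f u 1 := by
    intro u h
    have e0 : f u 0 = (g u).1 := by simp [hfdef]
    have e1 : f u 1 = (g u).2 := by simp [hfdef]
    rw [e0, e1] at h
    exact hg1 u h
  have hinj : ∀ u, Function.Injective (f u) := by
    intro u i j hij
    fin_cases i <;> fin_cases j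
    · rfl
    · exact absurd hij (hne01 u)
    · exact absurd hij.symm (hne01 u)
    · rfl
  have hsurjf : ∀ u v, A u v → ∃ i, f u i = v := by
    intro u v hv
    have hmem : v ∈ {v | A u v} := hv
    rw [hg2] at hmem
    rcases hmem with h | h
    · exact ⟨0, by simp [hfdef, h]⟩
    · rw [Set.mem_singleton_iff] at h
      exact ⟨1, by simp [hfdef, h]⟩
  have hO2 : ∀ u, (outlier A k u).ncard = 2 := by
    intro u
    have hr := Aux.reach_ncard hgeo hf hinj hsurjf u
    have hco : outlier A k u = {v | reachIn A k u v}ᶜ := rfl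
    have hcc := Set.ncard_add_ncard_compl {v | reachIn A k u v}
    rw [hr, Nat.card_eq_fintype_card, hcard] at hcc
    rw [hco]; omega
  have hSibU : ∀ u u₁ u₂, A u u₁ → A u u₂ → u₁ ≠ u₂ →
      S ⊆ outlier A k u₁ ∪ outlier A k u₂ := by
    intro u u₁ u₂ h1 h2 hne s hs
    have hsub : {p | A p s}.Subsingleton := by
      intro a ha b hb
      have hlt : {p | A p s}.ncard < 2 := hs
      exact (Set.ncard_le_one (Set.toFinite _)).mp (by omega) a ha b hb
    have hsb := Aux.sibling hgeo hsub h1 h2 hne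
    by_contra hcon
    rw [Set.mem_union] at hcon
    push_neg at hcon
    have hr1 : reachIn A k u₁ s := not_not.mp hcon.1
    have hr2 : reachIn A k u₂ s := not_not.mp hcon.2
    exact hsb ⟨hr1, hr2⟩
  have hpack : ∀ u u₁ u₂, A u u₁ → A u u₂ → u₁ ≠ u₂ →
      S = outlier A k u₁ ∪ outlier A k u₂ ∧ outlier A k u₁ ∩ outlier A k u₂ = ∅ := by
    intro u u₁ u₂ h1 h2 hne
    have hsubU := hSibU u u₁ u₂ h1 h2 hne
    have hUle : (outlier A k u₁ ∪ outlier A k u₂).ncard ≤ 4 := by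
      calc (outlier A k u₁ ∪ outlier A k u₂).ncard
          ≤ (outlier A k u₁).ncard + (outlier A k u₂).ncard := Set.ncard_union_le _ _
        _ = 4 := by rw [hO2, hO2]
    have hEq : S = outlier A k u₁ ∪ outlier A k u₂ :=
      Set.eq_of_subset_of_ncard_le hsubU (by rw [hS]; exact hUle) (Set.toFinite _)
    have hUcard : (outlier A k u₁ ∪ outlier A k u₂).ncard = 4 := by rw [← hEq]; exact hS
    have hui := Set.ncard_union_add_ncard_inter (outlier A k u₁) (outlier A k u₂)
      (Set.toFinite _) (Set.toFinite _)
    rw [hUcard, hO2, hO2] at hui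
    have hint : (outlier A k u₁ ∩ outlier A k u₂).ncard = 0 := by omega
    exact ⟨hEq, (Set.ncard_eq_zero (Set.toFinite _)).mp hint⟩
  have hnoend : ∀ x v : V, {p | A p v} = ∅ → ¬ reachIn A k x v ∨ x = v := by
    intro x v hemp
    by_cases hxv : x = v
    · right; exact hxv
    · left
      rintro ⟨l, hc, hh, hl, hlen⟩
      by_cases h2 : 2 ≤ l.length
      · obtain ⟨l', p, _, _, hpA, _, _, _⟩ := Aux.penult hc h2 hl
        have : p ∈ {p | A p v} := hpA
        rw [hemp] at this
        exact this
      · have h1 : l.length = 1 := by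
          have : l ≠ [] := by intro h; rw [h] at hh; simp at hh
          have := List.length_pos_iff.mpr this
          omega
        obtain ⟨a, rfl⟩ := List.length_eq_one_iff.mp h1
        have hax : a = x := by simpa using hh
        have hav : a = v := by simpa using hl
        exact hxv (hax ▸ hav ▸ rfl)
  have hpos : ∀ v : V, {p | A p v}.Nonempty := by
    intro v
    by_contra hcon
    rw [Set.not_nonempty_iff_eq_empty] at hcon
    have hvO : ∀ i : Fin 2, v ∈ outlier A k (f v i) := by
      intro i
      have hne : f v i ≠ v := by
        intro h
        have : v ∈ {p | A p v} := by
          have := hf v i; rw [h] at this; exact this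
        rw [hcon] at this; exact this
      rcases hnoend (f v i) v hcon with h | h
      · exact h
      · exact absurd h hne
    have hpk := hpack v (f v 0) (f v 1) (hf v 0) (hf v 1) (hne01 v)
    have : v ∈ outlier A k (f v 0) ∩ outlier A k (f v 1) := ⟨hvO 0, hvO 1⟩
    rw [hpk.2] at this
    exact this
  have hOsubS : ∀ u, outlier A k u ⊆ S ∧ ∃ w, outlier A k w = S \ outlier A k u := by
    intro u
    obtain ⟨p, hp⟩ := hpos u
    obtain ⟨i, hi⟩ := hsurjf p u hp
    have hij : ∀ j : Fin 2, j ≠ i → f p i ≠ f p j := by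
      intro j hj h
      exact hj (hinj p h).symm
    set j : Fin 2 := if i = 0 then 1 else 0 with hjdef
    have hjne : j ≠ i := by
      by_cases h0 : i = 0
      · rw [hjdef, if_pos h0, h0]; decide
      · rw [hjdef, if_neg h0]; exact fun h => h0 h.symm
    have hpk := hpack p (f p i) (f p j) (hf p i) (hf p j) (hij j hjne)
    rw [hi] at hpk
    constructor
    · intro x hx; rw [hpk.1]; exact Or.inl hx
    · refine ⟨f p j, ?_⟩
      ext x
      constructor
      · intro hx
        refine ⟨by rw [hpk.1]; exact Or.inr hx, fun hx' => ?_⟩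
        have : x ∈ outlier A k u ∩ outlier A k (f p j) := ⟨hx', hx⟩
        rw [hpk.2] at this
        exact this
      · rintro ⟨hxS, hxO⟩
        rw [hpk.1] at hxS
        rcases hxS with h | h
        · exact absurd h hxO
        · exact h
  have hNv : {t | A t v'}.ncard = 4 := hv'
  have heasy : ∀ x : V, ¬ A x v' → outlier A k x ⊆ {t | A t v'} := by
    intro x hx
    have hB : ∀ w : V, {t | A t v' ∧ reachIn A (k-1) w t}.ncard ≤ 1 :=
      fun w => Aux.sub_ncard_le_one (Aux.width (by omega) hgeo w v')
    have hsubB : {t | A t v'} \ outlier A k x ⊆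
        {t | A t v' ∧ reachIn A (k-1) (f x 0) t} ∪
        {t | A t v' ∧ reachIn A (k-1) (f x 1) t} := by
      rintro t ⟨htA, htO⟩
      have hre : reachIn A k x t := not_not.mp htO
      rcases Aux.split (by omega) hre with heq | ⟨w, hw, hrw⟩
      · rw [heq] at htA; exact absurd htA hx
      · obtain ⟨i, hi⟩ := hsurjf x w hw
        fin_cases i
        · exact Or.inl ⟨htA, hi ▸ hrw⟩
        · exact Or.inr ⟨htA, hi ▸ hrw⟩
    have hd2 : ({t | A t v'} \ outlier A k x).ncard ≤ 2 := by
      calc ({t | A t v'} \ outlier A k x).ncard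
          ≤ ({t | A t v' ∧ reachIn A (k-1) (f x 0) t} ∪
             {t | A t v' ∧ reachIn A (k-1) (f x 1) t}).ncard :=
            Set.ncard_le_ncard hsubB (Set.toFinite _)
        _ ≤ _ := Set.ncard_union_le _ _
        _ ≤ 2 := by have := hB (f x 0); have := hB (f x 1); omega
    have hid := Set.ncard_inter_add_ncard_diff_eq_ncard {t | A t v'} (outlier A k x)
      (Set.toFinite _)
    rw [hNv] at hid
    have hint2 : 2 ≤ ({t | A t v'} ∩ outlier A k x).ncard := by omega
    have heq2 : {t | A t v'} ∩ outlier A k x = outlier A k x :=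
      Set.eq_of_subset_of_ncard_le Set.inter_subset_right
        (by rw [hO2]; exact hint2) (Set.toFinite _)
    intro y hy
    rw [← heq2] at hy
    exact hy.1
  obtain ⟨u₀, hu₀⟩ : {t | A t v'}.Nonempty :=
    Set.nonempty_of_ncard_ne_zero (by rw [hNv]; omega)
  have hnotin : ∀ i : Fin 2, ¬ A (f u₀ i) v' := by
    intro i hcon
    have hw1 : [u₀, v'] ∈ walksUpTo A k u₀ v' := by
      refine ⟨?_, rfl, rfl, by simp; omega⟩
      rw [List.Chain', List.isChain_cons_cons]
      exact ⟨hu₀, List.isChain_singleton _⟩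
    have hw2 : [u₀, f u₀ i, v'] ∈ walksUpTo A k u₀ v' := by
      refine ⟨?_, rfl, rfl, by simp; omega⟩
      rw [List.Chain', List.isChain_cons_cons, List.isChain_cons_cons]
      exact ⟨hf u₀ i, hcon, List.isChain_singleton _⟩
    have := hgeo u₀ v' hw1 hw2
    have := congrArg List.length this
    simp at this
  have hSsub : S ⊆ {t | A t v'} := by
    have hpk := hpack u₀ (f u₀ 0) (f u₀ 1) (hf u₀ 0) (hf u₀ 1) (hne01 u₀)
    rw [hpk.1]
    exact Set.union_subset (heasy _ (hnotin 0)) (heasy _ (hnotin 1))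
  have hc1 : S = {t | A t v'} :=
    Set.eq_of_subset_of_ncard_le hSsub (by rw [hS, hNv]) (Set.toFinite _)
  exact ⟨hc1, fun u => (hOsubS u).1, fun u => (hOsubS u).2⟩
end

section
/- There is no k-geodetic digraph with minimum out-degree 2, order M(2,k)+2, and in-degree sequence (1,1,1,1,2,...,2,4,4) for k ≥ 2. -/
section AuxStmt10

set_option linter.unusedSectionVars false

variable {V : Type*} {A : V → V → Prop} {k : ℕ}

/-- The in-ball of radius `j` around `w`: vertices that reach `w` by a walk of length `≤ j`. -/
def ballIn (A : V → V → Prop) (j : ℕ) (w : V) : Set V := {u | reachIn A j u w}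

/-- The set of vertices of in-degree 1. -/
def D1s (A : V → V → Prop) : Set V := {v | inDeg A v = 1}

lemma singleton_mem_walks (j : ℕ) (w : V) : [w] ∈ walksUpTo A j w w :=
  ⟨List.isChain_singleton w, rfl, rfl, by simp⟩

lemma self_mem_ballIn (j : ℕ) (w : V) : w ∈ ballIn A j w :=
  ⟨[w], singleton_mem_walks j w⟩

lemma walks_ne_nil {j : ℕ} {u v : V} {l : List V} (h : l ∈ walksUpTo A j u v) : l ≠ [] := by
  intro hnil; subst hnil; exact absurd h.2.1 (by simp)

lemma walk_extend {j : ℕ} {u z w : V} {l : List V} (h : l ∈ walksUpTo A j u z) (hzw : A z w) :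
    l ++ [w] ∈ walksUpTo A (j + 1) u w := by
  obtain ⟨hc, hh, hl, hlen⟩ := h
  refine ⟨?_, ?_, List.getLast?_concat, by simpa using Nat.add_le_add_right hlen 1⟩
  · refine List.isChain_append.2 ⟨hc, List.isChain_singleton w, ?_⟩
    intro x hx y hy
    simp only [List.head?_cons, Option.mem_def, Option.some.injEq] at hy
    rw [hl] at hx
    simp only [Option.mem_def, Option.some.injEq] at hx
    subst hx; subst hy; exact hzw
  · cases l with
    | nil => exact absurd hh (by simp)
    | cons a t => simpa using hh

lemma walksUpTo_mono {j j' : ℕ} (h : j ≤ j') {u v : V} :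
    walksUpTo A j u v ⊆ walksUpTo A j' u v := by
  intro l ⟨hc, hh, hl, hlen⟩
  exact ⟨hc, hh, hl, hlen.trans (Nat.add_le_add_right h 1)⟩

lemma ballIn_mono {j j' : ℕ} (h : j ≤ j') (w : V) : ballIn A j w ⊆ ballIn A j' w := by
  intro u ⟨l, hl⟩; exact ⟨l, walksUpTo_mono h hl⟩

lemma ballIn_zero (w : V) : ballIn A 0 w = {w} := by
  ext u
  constructor
  · rintro ⟨l, hc, hh, hl, hlen⟩
    match l, hlen with
    | [a], _ =>
      simp only [List.head?_cons, Option.some.injEq] at hh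
      simp only [List.getLast?_singleton, Option.some.injEq] at hl
      simp [← hh, ← hl]
  · rintro rfl; exact self_mem_ballIn 0 u

lemma not_mem_ballIn (hgeo : IsGeodetic A k) {j : ℕ} (hj : j + 1 ≤ k) {z w : V}
    (hzw : A z w) : w ∉ ballIn A j z := by
  rintro ⟨l, hl⟩
  have h1 : l ++ [w] ∈ walksUpTo A k w w :=
    walksUpTo_mono hj (walk_extend hl hzw)
  have h2 : [w] ∈ walksUpTo A k w w := singleton_mem_walks k w
  have := hgeo w w h1 h2
  have hlen : (l ++ [w]).length = 1 := by rw [this]; rfl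
  simp only [List.length_append, List.length_singleton] at hlen
  exact walks_ne_nil hl (List.length_eq_zero_iff.1 (by omega))

lemma ballIn_disjoint (hgeo : IsGeodetic A k) {j : ℕ} (hj : j + 1 ≤ k) {z₁ z₂ w : V}
    (h1 : A z₁ w) (h2 : A z₂ w) (hne : z₁ ≠ z₂) :
    Disjoint (ballIn A j z₁) (ballIn A j z₂) := by
  rw [Set.disjoint_left]
  rintro u ⟨l1, hl1⟩ ⟨l2, hl2⟩
  have w1 : l1 ++ [w] ∈ walksUpTo A k u w := walksUpTo_mono hj (walk_extend hl1 h1)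
  have w2 : l2 ++ [w] ∈ walksUpTo A k u w := walksUpTo_mono hj (walk_extend hl2 h2)
  have heq : l1 ++ [w] = l2 ++ [w] := hgeo u w w1 w2
  have : l1 = l2 := List.append_cancel_right heq
  apply hne
  have e1 := hl1.2.2.1
  have e2 := hl2.2.2.1
  rw [this, e2] at e1
  exact (Option.some.injEq _ _ ▸ e1.symm :)

lemma arc_ballIn_subset {j : ℕ} {z w : V} (hzw : A z w) :
    ballIn A j z ⊆ ballIn A (j + 1) w := by
  rintro u ⟨l, hl⟩; exact ⟨l ++ [w], walk_extend hl hzw⟩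


variable [Fintype V]

lemma exists_two_innbrs (hall : ∀ v : V, inDeg A v = 1 ∨ inDeg A v = 2 ∨ inDeg A v = 4)
    {w : V} (hw : w ∉ D1s A) : ∃ z₁ z₂ : V, z₁ ≠ z₂ ∧ A z₁ w ∧ A z₂ w := by
  have h2 : 1 < inDeg A w := by
    rcases hall w with h | h | h
    · exact absurd h hw
    · omega
    · omega
  obtain ⟨a, b, ha, hb, hne⟩ := (Set.one_lt_ncard_iff (Set.toFinite _)).1 h2
  exact ⟨a, b, hne, ha, hb⟩

lemma exists_unique_innbr {w : V} (hw : w ∈ D1s A) :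
    ∃ z : V, A z w ∧ ∀ u : V, A u w → u = z := by
  obtain ⟨z, hz⟩ := Set.ncard_eq_one.1 hw
  refine ⟨z, ?_, ?_⟩
  · show z ∈ {u | A u w}
    rw [hz]; rfl
  · intro u hu
    have : u ∈ {u | A u w} := hu
    rw [hz] at this; exact this

lemma arith1 {S S' d d' c : ℕ} (h1 : 2*c+2 ≤ 1+S'+c*d') (h2 : 1+S' ≤ S)
    (h3 : (2*c+1)*(1+d') ≤ (2*c+1)*d) : 4*c+4 ≤ 1+S+(2*c+1)*d := by nlinarith
lemma arith2 {S S' d d' c : ℕ} (h1 : 2*c+2 ≤ 1+S'+c*d') (h2 : 1+S' ≤ S)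
    (h3 : c*(1+d') ≤ c*d) (h4 : (c+1)*2 ≤ (c+1)*d) :
    4*c+4+1 ≤ 1+S+(2*c+1)*d := by nlinarith
lemma arith3 {S S₁ S₂ d d₁ d₂ c : ℕ} (h1 : 2*c+2 ≤ 1+S₁+c*d₁) (h2 : 2*c+2 ≤ 1+S₂+c*d₂)
    (h3 : 1+S₁+S₂ ≤ S) (h4 : c*(d₁+d₂) ≤ c*d) : 4*c+4 ≤ 1+S+(2*c+1)*d := by nlinarith
lemma arith4 {S S₁ S₂ d d₁ d₂ c : ℕ} (h1 : 2*c+2 ≤ 1+S₁+c*d₁) (h2 : 2*c+2 ≤ 1+S₂+c*d₂)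
    (h3 : 1+S₁+S₂ ≤ S) (h4 : c*(d₁+d₂) ≤ c*d) (h5 : (c+1)*1 ≤ (c+1)*d) :
    4*c+4+1 ≤ 1+S+(2*c+1)*d := by nlinarith


lemma card_one_step (hgeo : IsGeodetic A k) {j : ℕ} (hj : j + 1 ≤ k) {z w : V}
    (hz : A z w) : 1 + (ballIn A j z).ncard ≤ (ballIn A (j + 1) w).ncard := by
  have hdisj : Disjoint ({w} : Set V) (ballIn A j z) := by
    simp [Set.disjoint_singleton_left, not_mem_ballIn hgeo hj hz]
  have hsub : ({w} : Set V) ∪ ballIn A j z ⊆ ballIn A (j + 1) w := by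
    apply Set.union_subset
    · simp [self_mem_ballIn]
    · exact arc_ballIn_subset hz
  calc 1 + (ballIn A j z).ncard = (({w} : Set V) ∪ ballIn A j z).ncard := by
        rw [Set.ncard_union_eq hdisj (Set.toFinite _) (Set.toFinite _), Set.ncard_singleton]
    _ ≤ _ := Set.ncard_le_ncard hsub (Set.toFinite _)

lemma card_two_step (hgeo : IsGeodetic A k) {j : ℕ} (hj : j + 1 ≤ k) {z₁ z₂ w : V}
    (h1 : A z₁ w) (h2 : A z₂ w) (hne : z₁ ≠ z₂) :
    1 + (ballIn A j z₁).ncard + (ballIn A j z₂).ncard ≤ (ballIn A (j + 1) w).ncard := by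
  have hd12 : Disjoint (ballIn A j z₁) (ballIn A j z₂) := ballIn_disjoint hgeo hj h1 h2 hne
  have hdisj : Disjoint ({w} : Set V) (ballIn A j z₁ ∪ ballIn A j z₂) := by
    simp [Set.disjoint_union_right, Set.disjoint_singleton_left,
      not_mem_ballIn hgeo hj h1, not_mem_ballIn hgeo hj h2]
  have hsub : ({w} : Set V) ∪ (ballIn A j z₁ ∪ ballIn A j z₂) ⊆ ballIn A (j + 1) w := by
    apply Set.union_subset
    · simp [self_mem_ballIn]
    · exact Set.union_subset (arc_ballIn_subset h1) (arc_ballIn_subset h2)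
  calc 1 + (ballIn A j z₁).ncard + (ballIn A j z₂).ncard
      = (({w} : Set V) ∪ (ballIn A j z₁ ∪ ballIn A j z₂)).ncard := by
        rw [Set.ncard_union_eq hdisj (Set.toFinite _) (Set.toFinite _),
          Set.ncard_union_eq hd12 (Set.toFinite _) (Set.toFinite _), Set.ncard_singleton]
        ring
    _ ≤ _ := Set.ncard_le_ncard hsub (Set.toFinite _)

lemma d_one_step (hgeo : IsGeodetic A k) {j : ℕ} (hj : j + 1 ≤ k) {z w : V} {D : Set V}
    (hz : A z w) (hwD : w ∈ D) :
    1 + (ballIn A j z ∩ D).ncard ≤ (ballIn A (j + 1) w ∩ D).ncard := by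
  have hdisj : Disjoint ({w} : Set V) (ballIn A j z ∩ D) := by
    simp only [Set.disjoint_singleton_left, Set.mem_inter_iff, not_and]
    intro hmem; exact absurd hmem (not_mem_ballIn hgeo hj hz)
  have hsub : ({w} : Set V) ∪ (ballIn A j z ∩ D) ⊆ ballIn A (j + 1) w ∩ D := by
    apply Set.union_subset
    · simp only [Set.singleton_subset_iff, Set.mem_inter_iff]
      exact ⟨self_mem_ballIn _ _, hwD⟩
    · exact Set.inter_subset_inter_left D (arc_ballIn_subset hz)
  calc 1 + (ballIn A j z ∩ D).ncard = (({w} : Set V) ∪ (ballIn A j z ∩ D)).ncard := by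
        rw [Set.ncard_union_eq hdisj (Set.toFinite _) (Set.toFinite _), Set.ncard_singleton]
    _ ≤ _ := Set.ncard_le_ncard hsub (Set.toFinite _)

lemma d_two_step (hgeo : IsGeodetic A k) {j : ℕ} (hj : j + 1 ≤ k) {z₁ z₂ w : V} {D : Set V}
    (h1 : A z₁ w) (h2 : A z₂ w) (hne : z₁ ≠ z₂) :
    (ballIn A j z₁ ∩ D).ncard + (ballIn A j z₂ ∩ D).ncard ≤ (ballIn A (j + 1) w ∩ D).ncard := by
  have hd12 : Disjoint (ballIn A j z₁ ∩ D) (ballIn A j z₂ ∩ D) :=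
    ((ballIn_disjoint hgeo hj h1 h2 hne).mono (Set.inter_subset_left) (Set.inter_subset_left))
  have hsub : (ballIn A j z₁ ∩ D) ∪ (ballIn A j z₂ ∩ D) ⊆ ballIn A (j + 1) w ∩ D :=
    Set.union_subset (Set.inter_subset_inter_left D (arc_ballIn_subset h1))
      (Set.inter_subset_inter_left D (arc_ballIn_subset h2))
  calc (ballIn A j z₁ ∩ D).ncard + (ballIn A j z₂ ∩ D).ncard
      = ((ballIn A j z₁ ∩ D) ∪ (ballIn A j z₂ ∩ D)).ncard :=
        (Set.ncard_union_eq hd12 (Set.toFinite _) (Set.toFinite _)).symm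
    _ ≤ _ := Set.ncard_le_ncard hsub (Set.toFinite _)


lemma lemPQ (hgeo : IsGeodetic A k)
    (hall : ∀ v : V, inDeg A v = 1 ∨ inDeg A v = 2 ∨ inDeg A v = 4) :
    ∀ j : ℕ, j ≤ k → ∀ w : V,
      (2 ^ (j + 1) ≤ 1 + (ballIn A j w).ncard
          + (2 ^ j - 1) * ((ballIn A (j - 1) w) ∩ D1s A).ncard) ∧
      (1 ≤ j →
        (2 ≤ ((ballIn A (j - 1) w) ∩ D1s A).ncard ∨
          (w ∉ D1s A ∧ 1 ≤ ((ballIn A (j - 1) w) ∩ D1s A).ncard)) →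
        2 ^ (j + 1) + 1 ≤ 1 + (ballIn A j w).ncard
          + (2 ^ j - 1) * ((ballIn A (j - 1) w) ∩ D1s A).ncard) := by
  intro j
  induction j with
  | zero =>
    intro _ w
    constructor
    · have : (ballIn A 0 w).ncard = 1 := by rw [ballIn_zero]; exact Set.ncard_singleton w
      simp [this]
    · intro h; omega
  | succ i ih =>
    intro hjk w
    have hik : i ≤ k := by omega
    obtain ⟨c, hc⟩ : ∃ c, (2 : ℕ) ^ i = c + 1 :=
      ⟨2 ^ i - 1, (Nat.succ_pred_eq_of_pos (Nat.pow_pos (by norm_num))).symm⟩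
    have hp1 : (2 : ℕ) ^ (i + 1) = 2 * c + 2 := by rw [pow_succ, hc]; ring
    have hp2 : (2 : ℕ) ^ (i + 1 + 1) = 4 * c + 4 := by rw [pow_succ, hp1]; ring
    have hco : (2 : ℕ) ^ (i + 1) - 1 = 2 * c + 1 := by omega
    have hsimp : (i + 1 : ℕ) - 1 = i := rfl
    rw [hsimp, hp2, hco]
    set S := (ballIn A (i + 1) w).ncard with hS
    set d := ((ballIn A i w) ∩ D1s A).ncard with hd
    by_cases hwD : w ∈ D1s A
    · -- unique in-neighbour z
      obtain ⟨z, hz, huniq⟩ := exists_unique_innbr hwD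
      set S' := (ballIn A i z).ncard with hS'
      set d' := ((ballIn A (i - 1) z) ∩ D1s A).ncard with hd'
      have hP := (ih hik z).1
      rw [hc, hp1] at hP
      have hPz : 2 * c + 2 ≤ 1 + S' + c * d' := by simpa using hP
      have hSstep : 1 + S' ≤ S := card_one_step hgeo hjk hz
      have hd1 : 1 ≤ d :=
        (Set.ncard_pos (Set.toFinite _)).2 ⟨w, ⟨self_mem_ballIn i w, hwD⟩⟩
      have hdd : c = 0 ∨ 1 + d' ≤ d := by
        rcases Nat.eq_zero_or_pos i with hi0 | hip
        · left; subst hi0; simpa using hc.symm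
        · right
          obtain ⟨m, rfl⟩ : ∃ m, i = m + 1 := ⟨i - 1, by omega⟩
          exact d_one_step hgeo (by omega) hz hwD
      constructor
      · rcases hdd with rfl | hdd
        · omega
        · exact arith1 hPz hSstep (Nat.mul_le_mul_left _ hdd)
      · intro _ hyp
        have hd2 : 2 ≤ d := by
          rcases hyp with h | ⟨hw', _⟩
          · exact h
          · exact absurd hwD hw'
        rcases hdd with rfl | hdd
        · omega
        · exact arith2 hPz hSstep (Nat.mul_le_mul_left _ hdd) (Nat.mul_le_mul_left _ hd2)
    · -- w has two distinct in-neighbours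
      obtain ⟨z₁, z₂, hne, hz1, hz2⟩ := exists_two_innbrs hall hwD
      set S₁ := (ballIn A i z₁).ncard with hS₁
      set S₂ := (ballIn A i z₂).ncard with hS₂
      set d₁ := ((ballIn A (i - 1) z₁) ∩ D1s A).ncard with hd₁
      set d₂ := ((ballIn A (i - 1) z₂) ∩ D1s A).ncard with hd₂
      have hP1 := (ih hik z₁).1
      have hP2 := (ih hik z₂).1
      rw [hc, hp1] at hP1 hP2
      have hPz1 : 2 * c + 2 ≤ 1 + S₁ + c * d₁ := by simpa using hP1
      have hPz2 : 2 * c + 2 ≤ 1 + S₂ + c * d₂ := by simpa using hP2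
      have hSstep : 1 + S₁ + S₂ ≤ S := card_two_step hgeo hjk hz1 hz2 hne
      have hdd : c = 0 ∨ d₁ + d₂ ≤ d := by
        rcases Nat.eq_zero_or_pos i with hi0 | hip
        · left; subst hi0; simpa using hc.symm
        · right
          obtain ⟨m, rfl⟩ : ∃ m, i = m + 1 := ⟨i - 1, by omega⟩
          exact d_two_step hgeo (by omega) hz1 hz2 hne
      constructor
      · rcases hdd with rfl | hdd
        · omega
        · exact arith3 hPz1 hPz2 hSstep (Nat.mul_le_mul_left _ hdd)
      · intro _ hyp
        have hd1 : 1 ≤ d := by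
          rcases hyp with h | ⟨_, h⟩ <;> omega
        rcases hdd with rfl | hdd
        · omega
        · exact arith4 hPz1 hPz2 hSstep (Nat.mul_le_mul_left _ hdd) (Nat.mul_le_mul_left _ hd1)

lemma key_four (hgeo : IsGeodetic A k) (hk : 2 ≤ k)
    (hall : ∀ v : V, inDeg A v = 1 ∨ inDeg A v = 2 ∨ inDeg A v = 4)
    (hcard : Fintype.card V = 2 ^ (k + 1) + 1)
    (h1 : (D1s A).ncard = 4) (x : V) (hx : inDeg A x = 4) :
    {u | A u x} = D1s A ∧ ∀ y : V, y ≠ x → ∃ w : V, A w x ∧ y ∈ ballIn A (k - 1) w := by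
  classical
  have e1 : k - 1 + 1 = k := by omega
  have e2 : k - 1 - 1 = k - 2 := by omega
  have e3 : k - 2 + 1 = k - 1 := by omega
  obtain ⟨p, hp⟩ : ∃ p, (2 : ℕ) ^ (k - 2) = p + 1 :=
    ⟨2 ^ (k - 2) - 1, (Nat.succ_pred_eq_of_pos (Nat.pow_pos (by norm_num))).symm⟩
  have hpow1 : (2 : ℕ) ^ (k - 1) = 2 * p + 2 := by
    rw [← e3, pow_succ, hp]; ring
  have hpow2 : (2 : ℕ) ^ k = 4 * p + 4 := by
    rw [← e1, pow_succ, hpow1]; ring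
  have hpow3 : (2 : ℕ) ^ (k + 1) = 8 * p + 8 := by rw [pow_succ, hpow2]; ring
  set N : Finset V := {u | A u x}.toFinset with hN
  have hmemN : ∀ w, w ∈ N ↔ A w x := by intro w; simp [hN]
  have hNcard : N.card = 4 := by
    rw [hN, ← Set.ncard_eq_toFinset_card']; exact hx
  -- the four balls of radius k-1 are pairwise disjoint and avoid x
  have hdisj : ∀ w₁ ∈ N, ∀ w₂ ∈ N, w₁ ≠ w₂ →
      Disjoint (ballIn A (k - 1) w₁).toFinset (ballIn A (k - 1) w₂).toFinset := by
    intro w₁ h₁ w₂ h₂ hne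
    rw [Set.disjoint_toFinset]
    exact ballIn_disjoint hgeo (by omega) ((hmemN w₁).1 h₁) ((hmemN w₂).1 h₂) hne
  set U : Finset V := N.biUnion (fun w => (ballIn A (k - 1) w).toFinset) with hU
  have hUcard : U.card = ∑ w ∈ N, (ballIn A (k - 1) w).toFinset.card :=
    Finset.card_biUnion hdisj
  have hUsub : U ⊆ Finset.univ.erase x := by
    intro y hy
    rw [hU, Finset.mem_biUnion] at hy
    obtain ⟨w, hwN, hyb⟩ := hy
    rw [Set.mem_toFinset] at hyb
    rw [Finset.mem_erase]
    refine ⟨?_, Finset.mem_univ y⟩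
    rintro rfl
    exact not_mem_ballIn hgeo (by omega) ((hmemN w).1 hwN) hyb
  have herase : (Finset.univ.erase x).card = 2 ^ (k + 1) := by
    rw [Finset.card_erase_of_mem (Finset.mem_univ x), Finset.card_univ, hcard]
    omega
  have hUle : ∑ w ∈ N, (ballIn A (k - 1) w).toFinset.card ≤ 2 ^ (k + 1) := by
    rw [← hUcard, ← herase]
    exact Finset.card_le_card hUsub
  -- the defect counts
  have hddisj : ∀ w₁ ∈ N, ∀ w₂ ∈ N, w₁ ≠ w₂ →
      Disjoint ((ballIn A (k - 2) w₁) ∩ D1s A).toFinset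
        ((ballIn A (k - 2) w₂) ∩ D1s A).toFinset := by
    intro w₁ h₁ w₂ h₂ hne
    rw [Set.disjoint_toFinset]
    have := ballIn_disjoint hgeo (k := k) (j := k - 2) (by omega)
      ((hmemN w₁).1 h₁) ((hmemN w₂).1 h₂) hne
    exact this.mono (Set.inter_subset_left) (Set.inter_subset_left)
  have hdsum : ∑ w ∈ N, ((ballIn A (k - 2) w) ∩ D1s A).toFinset.card ≤ 4 := by
    rw [← Finset.card_biUnion hddisj]
    calc (N.biUnion fun w => ((ballIn A (k - 2) w) ∩ D1s A).toFinset).card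
        ≤ (D1s A).toFinset.card := by
          apply Finset.card_le_card
          intro y hy
          rw [Finset.mem_biUnion] at hy
          obtain ⟨w, _, hyb⟩ := hy
          rw [Set.mem_toFinset] at hyb ⊢
          exact hyb.2
      _ = 4 := by rw [← Set.ncard_eq_toFinset_card']; exact h1
  -- per-ball lower bound
  have hP : ∀ w ∈ N, 2 ^ k ≤ 1 + (ballIn A (k - 1) w).toFinset.card
      + (2 ^ (k - 1) - 1) * ((ballIn A (k - 2) w) ∩ D1s A).toFinset.card := by
    intro w _
    have := (lemPQ hgeo hall (k - 1) (by omega) w).1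
    rw [e1, e2] at this
    rw [← Set.ncard_eq_toFinset_card', ← Set.ncard_eq_toFinset_card']
    exact this
  have hco : (2 : ℕ) ^ (k - 1) - 1 = 2 * p + 1 := by omega
  set sS := ∑ w ∈ N, (ballIn A (k - 1) w).toFinset.card with hsS
  set sd := ∑ w ∈ N, ((ballIn A (k - 2) w) ∩ D1s A).toFinset.card with hsd
  have hsum1 : 4 * 2 ^ k ≤ 4 + sS + (2 * p + 1) * sd := by
    calc 4 * 2 ^ k = ∑ _w ∈ N, 2 ^ k := by rw [Finset.sum_const, hNcard, smul_eq_mul]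
      _ ≤ ∑ w ∈ N, (1 + (ballIn A (k - 1) w).toFinset.card
          + (2 ^ (k - 1) - 1) * ((ballIn A (k - 2) w) ∩ D1s A).toFinset.card) :=
        Finset.sum_le_sum hP
      _ = 4 + sS + (2 * p + 1) * sd := by
        simp_rw [hco]
        rw [Finset.sum_add_distrib, Finset.sum_add_distrib, Finset.sum_const, hNcard,
          smul_eq_mul, ← Finset.mul_sum, ← hsS, ← hsd]
  by_cases hstrict : ∃ w ∈ N, 2 ≤ ((ballIn A (k - 2) w) ∩ D1s A).toFinset.card ∨
      (w ∉ D1s A ∧ 1 ≤ ((ballIn A (k - 2) w) ∩ D1s A).toFinset.card)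
  · exfalso
    obtain ⟨w₀, hw₀N, hw₀⟩ := hstrict
    have hQ : 2 ^ k + 1 ≤ 1 + (ballIn A (k - 1) w₀).toFinset.card
        + (2 ^ (k - 1) - 1) * ((ballIn A (k - 2) w₀) ∩ D1s A).toFinset.card := by
      have hq := (lemPQ hgeo hall (k - 1) (by omega) w₀).2 (by omega)
      rw [e1, e2] at hq
      rw [← Set.ncard_eq_toFinset_card', ← Set.ncard_eq_toFinset_card']
      apply hq
      rw [Set.ncard_eq_toFinset_card']
      exact hw₀
    have hlt : ∑ _w ∈ N, 2 ^ k < ∑ w ∈ N, (1 + (ballIn A (k - 1) w).toFinset.card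
        + (2 ^ (k - 1) - 1) * ((ballIn A (k - 2) w) ∩ D1s A).toFinset.card) :=
      Finset.sum_lt_sum hP ⟨w₀, hw₀N, by omega⟩
    have hlt2 : 4 * 2 ^ k + 1 ≤ 4 + sS + (2 * p + 1) * sd := by
      rw [Finset.sum_const, hNcard, smul_eq_mul] at hlt
      have heq : ∑ w ∈ N, (1 + (ballIn A (k - 1) w).toFinset.card
          + (2 ^ (k - 1) - 1) * ((ballIn A (k - 2) w) ∩ D1s A).toFinset.card)
          = 4 + sS + (2 * p + 1) * sd := by
        simp_rw [hco]
        rw [Finset.sum_add_distrib, Finset.sum_add_distrib, Finset.sum_const, hNcard,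
          smul_eq_mul, ← Finset.mul_sum, ← hsS, ← hsd]
      omega
    have hmul : (2 * p + 1) * sd ≤ 8 * p + 4 := by
      calc (2 * p + 1) * sd ≤ (2 * p + 1) * 4 := Nat.mul_le_mul_left _ hdsum
        _ = 8 * p + 4 := by ring
    omega
  · push_neg at hstrict
    by_cases hallD : ∀ w ∈ N, w ∈ D1s A
    · -- N = D1s, and the balls cover everything but x
      have hsub : N ⊆ (D1s A).toFinset := by
        intro w hw; rw [Set.mem_toFinset]; exact hallD w hw
      have hD1card : (D1s A).toFinset.card = 4 := by
        rw [← Set.ncard_eq_toFinset_card']; exact h1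
      have hNeq : N = (D1s A).toFinset :=
        Finset.eq_of_subset_of_card_le hsub (by omega)
      have hdd1 : ∀ w ∈ N, ((ballIn A (k - 2) w) ∩ D1s A).toFinset.card = 1 := by
        intro w hw
        have hge : 1 ≤ ((ballIn A (k - 2) w) ∩ D1s A).toFinset.card := by
          rw [← Set.ncard_eq_toFinset_card']
          exact (Set.ncard_pos (Set.toFinite _)).2 ⟨w, ⟨self_mem_ballIn _ _, hallD w hw⟩⟩
        have hle := (hstrict w hw).1
        omega
      have hsd4 : sd = 4 := by
        rw [hsd, Finset.sum_congr rfl hdd1, Finset.sum_const, hNcard, smul_eq_mul]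
      have hsSge : 2 ^ (k + 1) ≤ sS := by
        rw [hsd4] at hsum1
        omega
      have hUeq : U = Finset.univ.erase x := by
        apply Finset.eq_of_subset_of_card_le hUsub
        rw [herase, hUcard]
        exact hsSge
      constructor
      · rw [← Set.toFinset_inj, ← hN, hNeq]
      · intro y hyx
        have hymem : y ∈ U := by
          rw [hUeq, Finset.mem_erase]
          exact ⟨hyx, Finset.mem_univ y⟩
        rw [hU, Finset.mem_biUnion] at hymem
        obtain ⟨w, hwN, hyb⟩ := hymem
        exact ⟨w, (hmemN w).1 hwN, Set.mem_toFinset.1 hyb⟩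
    · exfalso
      push_neg at hallD
      obtain ⟨w₀, hw₀N, hw₀D⟩ := hallD
      have hdd0 : ((ballIn A (k - 2) w₀) ∩ D1s A).toFinset.card = 0 := by
        have := (hstrict w₀ hw₀N).2 hw₀D
        omega
      have hsd3 : sd ≤ 3 := by
        have hsplit : ∑ w ∈ N.erase w₀, ((ballIn A (k - 2) w) ∩ D1s A).toFinset.card
            + ((ballIn A (k - 2) w₀) ∩ D1s A).toFinset.card = sd := by
          rw [hsd]
          exact Finset.sum_erase_add N _ hw₀N
        have hbound : ∑ w ∈ N.erase w₀, ((ballIn A (k - 2) w) ∩ D1s A).toFinset.card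
            ≤ (N.erase w₀).card * 1 := by
          apply Finset.sum_le_card_nsmul
          intro w hw
          have := (hstrict w (Finset.mem_of_mem_erase hw)).1
          omega
        have hecard : (N.erase w₀).card = 3 := by
          rw [Finset.card_erase_of_mem hw₀N, hNcard]
        omega
      have hmul : (2 * p + 1) * sd ≤ 6 * p + 3 := by
        calc (2 * p + 1) * sd ≤ (2 * p + 1) * 3 := Nat.mul_le_mul_left _ hsd3
          _ = 6 * p + 3 := by ring
      have hsS' : sS ≤ 8 * p + 8 := by rw [hpow3] at hUle; exact hUle
      have hfinal : 16 * p + 16 ≤ 14 * p + 15 := by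
        calc 16 * p + 16 = 4 * 2 ^ k := by rw [hpow2]; ring
          _ ≤ 4 + sS + (2 * p + 1) * sd := hsum1
          _ ≤ 4 + (8 * p + 8) + (6 * p + 3) := by
            exact Nat.add_le_add (Nat.add_le_add_left hsS' 4) hmul
          _ = 14 * p + 15 := by ring
      omega

lemma moore_two (k : ℕ) : moore 2 k + 1 = 2 ^ (k + 1) := by
  induction k with
  | zero => rfl
  | succ n ih =>
    rw [moore, Finset.sum_range_succ, ← moore]
    rw [pow_succ (2:ℕ) (n+1)]
    omega

end AuxStmt10

/-- There is no `k`-geodetic digraph with minimum out-degree 2, order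
`M(2,k)+2`, and in-degree sequence `(1,1,1,1,2,…,2,4,4)` for `k ≥ 2`. -/
theorem stmt10 {V : Type*} [Fintype V] (A : V → V → Prop) (k : ℕ) (hk : 2 ≤ k)
    (hgeo : IsGeodetic A k) (hout : ∀ u : V, 2 ≤ outDeg A u)
    (hcard : Fintype.card V = moore 2 k + 2)
    (h1 : {v : V | inDeg A v = 1}.ncard = 4)
    (h4 : {v : V | inDeg A v = 4}.ncard = 2)
    (hall : ∀ v : V, inDeg A v = 1 ∨ inDeg A v = 2 ∨ inDeg A v = 4) :
    False := by
  have hcard' : Fintype.card V = 2 ^ (k + 1) + 1 := by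
    rw [hcard, ← moore_two k]
  have h1' : (D1s A).ncard = 4 := h1
  obtain ⟨v, v', hne, hvv'⟩ := Set.ncard_eq_two.1 h4
  have hv4 : inDeg A v = 4 := by
    have : v ∈ {v : V | inDeg A v = 4} := by rw [hvv']; left; rfl
    exact this
  have hv'4 : inDeg A v' = 4 := by
    have : v' ∈ {v : V | inDeg A v = 4} := by rw [hvv']; right; rfl
    exact this
  obtain ⟨hNv, hcover⟩ := key_four hgeo hk hall hcard' h1' v hv4
  obtain ⟨hNv', -⟩ := key_four hgeo hk hall hcard' h1' v' hv'4
  obtain ⟨w, hwv, hv'ball⟩ := hcover v' hne.symm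
  have hwD1 : w ∈ D1s A := by rw [← hNv]; exact hwv
  have hwv' : A w v' := by
    have : w ∈ {u | A u v'} := by rw [hNv']; exact hwD1
    exact this
  exact not_mem_ballIn hgeo (by omega) hwv' hv'ball
end

section
/- There is no 2-geodetic digraph on 9 vertices with minimum out-degree 2 and in-degree sequence (1,2,2,2,2,2,2,2,3). -/
open Finset

section Aux

variable {V : Type*} [Fintype V]

open scoped Classical in
/-- In-neighbourhood as a finset. -/
noncomputable def NinF (A : V → V → Prop) (v : V) : Finset V :=
  Finset.univ.filter fun u => A u v

open scoped Classical in
/-- Out-neighbourhood as a finset. -/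
noncomputable def NoutF (A : V → V → Prop) (u : V) : Finset V :=
  Finset.univ.filter fun v => A u v

lemma mem_NinF {A : V → V → Prop} {u v : V} : u ∈ NinF A v ↔ A u v := by
  simp [NinF]

lemma mem_NoutF {A : V → V → Prop} {u v : V} : v ∈ NoutF A u ↔ A u v := by
  simp [NoutF]

lemma inDeg_eq (A : V → V → Prop) (v : V) : inDeg A v = (NinF A v).card := by
  classical
  rw [inDeg, ← Set.ncard_coe_finset]
  congr 1
  ext u
  simp [NinF]

lemma outDeg_eq (A : V → V → Prop) (u : V) : outDeg A u = (NoutF A u).card := by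
  classical
  rw [outDeg, ← Set.ncard_coe_finset]
  congr 1
  ext v
  simp [NoutF]

lemma sum_out_eq_sum_in (A : V → V → Prop) :
    ∑ u, outDeg A u = ∑ v, inDeg A v := by
  classical
  simp only [outDeg_eq, inDeg_eq, NoutF, NinF, Finset.card_filter]
  exact Finset.sum_comm

end Aux

section Walks

variable {V : Type*} {A : V → V → Prop}

lemma walk0 (u : V) : [u] ∈ walksUpTo A 2 u u := by
  simp [walksUpTo, List.Chain']

lemma walk1 {u v : V} (h : A u v) : [u, v] ∈ walksUpTo A 2 u v := by
  simp [walksUpTo, List.Chain', h]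

lemma walk2 {u w v : V} (h1 : A u w) (h2 : A w v) : [u, w, v] ∈ walksUpTo A 2 u v := by
  simp [walksUpTo, List.Chain', h1, h2]

lemma noLoop (hgeo : IsGeodetic A 2) {u : V} (h : A u u) : False := by
  have := hgeo u u (walk1 h) (walk0 u)
  simp at this

lemma noDigon (hgeo : IsGeodetic A 2) {u v : V} (h1 : A u v) (h2 : A v u) : False := by
  have := hgeo u u (walk2 h1 h2) (walk0 u)
  simp at this

lemma no12 (hgeo : IsGeodetic A 2) {u v w : V} (hv : A u v) (hw : A u w) (hwv : A w v) :
    False := by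
  have := hgeo u v (walk1 hv) (walk2 hw hwv)
  simp at this

lemma no22 (hgeo : IsGeodetic A 2) {u v w w' : V} (h1 : A u w) (h2 : A w v)
    (h3 : A u w') (h4 : A w' v) (hne : w ≠ w') : False := by
  have := hgeo u v (walk2 h1 h2) (walk2 h3 h4)
  exact hne (by simpa using this)

end Walks

section Out3

variable {V : Type*} [Fintype V]

lemma out3 {A : V → V → Prop} {t w1 w2 w3 : V} (hdeg : outDeg A t = 2)
    (h1 : A t w1) (h2 : A t w2) (h3 : A t w3)
    (n12 : w1 ≠ w2) (n13 : w1 ≠ w3) (n23 : w2 ≠ w3) : False := by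
  classical
  have hsub : ({w1, w2, w3} : Finset V) ⊆ NoutF A t := by
    intro x hx
    simp only [Finset.mem_insert, Finset.mem_singleton] at hx
    rcases hx with rfl | rfl | rfl
    · exact mem_NoutF.2 h1
    · exact mem_NoutF.2 h2
    · exact mem_NoutF.2 h3
  have hc : ({w1, w2, w3} : Finset V).card = 3 := by
    rw [Finset.card_insert_of_notMem (by simp [n12, n13]), Finset.card_pair n23]
  have hle := Finset.card_le_card hsub
  rw [hc, ← outDeg_eq, hdeg] at hle
  omega

end Out3

/-- There is no 2-geodetic digraph on 9 vertices with minimum out-degree 2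
and in-degree sequence `(1,2,2,2,2,2,2,2,3)`. -/
theorem stmt12 {V : Type*} [Fintype V] (A : V → V → Prop)
    (hgeo : IsGeodetic A 2) (hout : ∀ u : V, 2 ≤ outDeg A u)
    (hcard : Fintype.card V = 9)
    (h1 : {v : V | inDeg A v = 1}.ncard = 1)
    (h3 : {v : V | inDeg A v = 3}.ncard = 1)
    (hall : ∀ v : V, inDeg A v = 1 ∨ inDeg A v = 2 ∨ inDeg A v = 3) :
    False := by
  classical
  obtain ⟨x0, hx0⟩ := Set.ncard_eq_one.mp h1
  obtain ⟨z, hz⟩ := Set.ncard_eq_one.mp h3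
  have hx0deg : inDeg A x0 = 1 := by
    have : x0 ∈ ({x0} : Set V) := rfl
    rw [← hx0] at this
    exact this
  have hzdeg : inDeg A z = 3 := by
    have : z ∈ ({z} : Set V) := rfl
    rw [← hz] at this
    exact this
  have huniq1 : ∀ v, inDeg A v = 1 → v = x0 := by
    intro v hv
    have : v ∈ {v : V | inDeg A v = 1} := hv
    rw [hx0] at this
    exact this
  have huniq3 : ∀ v, inDeg A v = 3 → v = z := by
    intro v hv
    have : v ∈ {v : V | inDeg A v = 3} := hv
    rw [hz] at this
    exact this
  have hx0z : x0 ≠ z := by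
    intro h
    rw [h, hzdeg] at hx0deg
    omega
  have hdeg2 : ∀ v, v ≠ x0 → v ≠ z → inDeg A v = 2 := by
    intro v hvx hvz
    rcases hall v with h | h | h
    · exact absurd (huniq1 v h) hvx
    · exact h
    · exact absurd (huniq3 v h) hvz
  -- sum of in-degrees is 18
  have hsum : ∑ v, inDeg A v = 18 := by
    have hsub : ({x0, z} : Finset V) ⊆ univ := subset_univ _
    rw [← Finset.sum_sdiff hsub]
    have h2 : ∑ v ∈ univ \ ({x0, z} : Finset V), inDeg A v = 14 := by
      have hc : ∀ v ∈ univ \ ({x0, z} : Finset V), inDeg A v = 2 := by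
        intro v hv
        simp only [mem_sdiff, mem_insert, mem_singleton, mem_univ, true_and, not_or] at hv
        exact hdeg2 v hv.1 hv.2
      rw [Finset.sum_congr rfl hc, Finset.sum_const, smul_eq_mul,
        Finset.card_sdiff_of_subset hsub, card_univ, hcard, Finset.card_pair hx0z]
    rw [h2, Finset.sum_pair hx0z, hx0deg, hzdeg]
    omega
  -- all out-degrees equal 2
  have hout2 : ∀ u, outDeg A u = 2 := by
    by_contra hne
    push_neg at hne
    obtain ⟨u0, hu0⟩ := hne
    have hlt : ∑ _u : V, (2 : ℕ) < ∑ u, outDeg A u :=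
      Finset.sum_lt_sum (fun i _ => hout i) ⟨u0, mem_univ u0, by have := hout u0; omega⟩
    rw [Finset.sum_const, smul_eq_mul, card_univ, hcard, sum_out_eq_sum_in, hsum] at hlt
    omega
  -- structure around z
  set Nz := NinF A z with hNzdef
  have hNzcard : Nz.card = 3 := by rw [hNzdef, ← inDeg_eq, hzdeg]
  have hAz : ∀ w ∈ Nz, A w z := fun w hw => mem_NinF.1 hw
  have hznotNz : z ∉ Nz := fun h => noLoop hgeo (hAz z h)
  have hdisj1 : ∀ w ∈ Nz, z ∉ NinF A w := fun w hw h =>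
    noDigon hgeo (mem_NinF.1 h) (hAz w hw)
  have hdisj2 : Disjoint Nz (Nz.biUnion (NinF A)) := by
    rw [Finset.disjoint_left]
    intro u hu hub
    obtain ⟨w, hw, huw⟩ := Finset.mem_biUnion.1 hub
    exact no12 hgeo (hAz u hu) (mem_NinF.1 huw) (hAz w hw)
  have hbUcard : (Nz.biUnion (NinF A)).card = ∑ w ∈ Nz, (NinF A w).card :=
    Finset.card_biUnion (fun w hw w' hw' hne => by
      rw [Function.onFun, Finset.disjoint_left]
      intro u hu hu'
      exact no22 hgeo (mem_NinF.1 hu) (hAz w hw) (mem_NinF.1 hu') (hAz w' hw') hne)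
  have hzU : z ∉ Nz ∪ Nz.biUnion (NinF A) := by
    intro h
    rcases Finset.mem_union.1 h with h | h
    · exact hznotNz h
    · obtain ⟨w, hw, hzw⟩ := Finset.mem_biUnion.1 h
      exact hdisj1 w hw hzw
  have hTcard : (insert z (Nz ∪ Nz.biUnion (NinF A))).card
      = 4 + ∑ w ∈ Nz, (NinF A w).card := by
    rw [Finset.card_insert_of_notMem hzU, Finset.card_union_of_disjoint hdisj2,
      hNzcard, hbUcard]
    omega
  have hT9 : 4 + ∑ w ∈ Nz, (NinF A w).card ≤ 9 := by
    rw [← hTcard, ← hcard, ← card_univ]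
    exact Finset.card_le_card (subset_univ _)
  -- x0 is an in-neighbour of z
  have hx0Nz : x0 ∈ Nz := by
    by_contra hx0n
    have hge : ∀ w ∈ Nz, 2 ≤ (NinF A w).card := by
      intro w hw
      rw [← inDeg_eq]
      rcases hall w with h | h | h
      · exact absurd (huniq1 w h ▸ hw) hx0n
      · omega
      · omega
    have h6 : Nz.card • 2 ≤ ∑ w ∈ Nz, (NinF A w).card :=
      Finset.card_nsmul_le_sum Nz _ 2 hge
    rw [hNzcard, smul_eq_mul] at h6
    omega
  obtain ⟨p, q, hpq, hPQ⟩ := Finset.card_eq_two.mp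
    (show (Nz.erase x0).card = 2 by rw [Finset.card_erase_of_mem hx0Nz, hNzcard])
  have hNzeq : Nz = {x0, p, q} := by
    rw [← Finset.insert_erase hx0Nz, hPQ]
  have hpNz : p ∈ Nz := by rw [hNzeq]; simp
  have hqNz : q ∈ Nz := by rw [hNzeq]; simp
  have hpx0 : p ≠ x0 := Finset.ne_of_mem_erase (by rw [hPQ]; simp)
  have hqx0 : q ≠ x0 := Finset.ne_of_mem_erase (by rw [hPQ]; simp)
  have hApz : A p z := hAz p hpNz
  have hAqz : A q z := hAz q hqNz
  have hAx0z : A x0 z := hAz x0 hx0Nz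
  have hpdeg : inDeg A p = 2 := hdeg2 p hpx0 (fun h => hznotNz (h ▸ hpNz))
  have hqdeg : inDeg A q = 2 := hdeg2 q hqx0 (fun h => hznotNz (h ▸ hqNz))
  have hsumNzeq : ∑ w ∈ Nz, (NinF A w).card = 5 := by
    rw [hNzeq, Finset.sum_insert (by simp [Ne.symm hpx0, Ne.symm hqx0]),
      Finset.sum_pair hpq, ← inDeg_eq, ← inDeg_eq, ← inDeg_eq, hx0deg, hpdeg, hqdeg]
    omega
  -- every vertex outside {z} ∪ Nz has an out-arc into Nz
  have hTuniv : insert z (Nz ∪ Nz.biUnion (NinF A)) = univ :=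
    Finset.eq_univ_of_card _ (by rw [hTcard, hsumNzeq, hcard])
  have hreach : ∀ v : V, v ≠ z → v ∉ Nz → ∃ w ∈ Nz, A v w := by
    intro v hvz hvNz
    have hv : v ∈ insert z (Nz ∪ Nz.biUnion (NinF A)) := hTuniv ▸ mem_univ v
    rcases Finset.mem_insert.1 hv with h | h
    · exact absurd h hvz
    rcases Finset.mem_union.1 h with h | h
    · exact absurd h hvNz
    obtain ⟨w, hw, hvw⟩ := Finset.mem_biUnion.1 h
    exact ⟨w, hw, mem_NinF.1 hvw⟩
  have hSdeg : ∀ v, v ≠ z → v ∉ Nz → inDeg A v = 2 := by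
    intro v hvz hvNz
    exact hdeg2 v (fun h => hvNz (h ▸ hx0Nz)) hvz
  -- out-neighbours of z
  obtain ⟨a, b, hab, hNout⟩ := Finset.card_eq_two.mp
    (show (NoutF A z).card = 2 by rw [← outDeg_eq, hout2])
  have hAza : A z a := mem_NoutF.1 (by rw [hNout]; simp)
  have hAzb : A z b := mem_NoutF.1 (by rw [hNout]; simp)
  have hnotz : ∀ v, A z v → v ≠ z ∧ v ∉ Nz := by
    intro v hv
    constructor
    · rintro rfl
      exact noLoop hgeo hv
    · intro hvNz
      exact noDigon hgeo hv (hAz v hvNz)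
  obtain ⟨haz, haNz⟩ := hnotz a hAza
  obtain ⟨hbz, hbNz⟩ := hnotz b hAzb
  have hadeg : inDeg A a = 2 := hSdeg a haz haNz
  have hbdeg : inDeg A b = 2 := hSdeg b hbz hbNz
  -- second in-neighbour of a
  have hzmema : z ∈ NinF A a := mem_NinF.2 hAza
  obtain ⟨ta, hta⟩ := Finset.card_eq_one.mp (show ((NinF A a).erase z).card = 1 by
    rw [Finset.card_erase_of_mem hzmema, ← inDeg_eq, hadeg])
  have htaz : ta ≠ z := Finset.ne_of_mem_erase (by rw [hta]; simp)
  have hAtaa : A ta a := mem_NinF.1 (Finset.mem_of_mem_erase (by rw [hta]; simp))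
  -- second in-neighbour of b
  have hzmemb : z ∈ NinF A b := mem_NinF.2 hAzb
  obtain ⟨tb, htb⟩ := Finset.card_eq_one.mp (show ((NinF A b).erase z).card = 1 by
    rw [Finset.card_erase_of_mem hzmemb, ← inDeg_eq, hbdeg])
  have htbz : tb ≠ z := Finset.ne_of_mem_erase (by rw [htb]; simp)
  have hAtbb : A tb b := mem_NinF.1 (Finset.mem_of_mem_erase (by rw [htb]; simp))
  -- basic distinctness facts
  have htaNz : ta ∉ Nz := fun h => no12 hgeo hAtaa (hAz ta h) hAza
  have htbNz : tb ∉ Nz := fun h => no12 hgeo hAtbb (hAz tb h) hAzb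
  have htaa : ta ≠ a := by rintro rfl; exact noLoop hgeo hAtaa
  have htbb : tb ≠ b := by rintro rfl; exact noLoop hgeo hAtbb
  have htab : ta ≠ b := by rintro rfl; exact no12 hgeo hAza hAzb hAtaa
  have htba : tb ≠ a := by rintro rfl; exact no12 hgeo hAzb hAza hAtbb
  have htatb : ta ≠ tb := by
    rintro rfl
    obtain ⟨w, hw, hAw⟩ := hreach ta htaz htaNz
    exact out3 (hout2 ta) hAw hAtaa hAtbb
      (fun h => haNz (h ▸ hw)) (fun h => hbNz (h ▸ hw)) hab
  have hax0 : a ≠ x0 := fun h => haNz (h ▸ hx0Nz)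
  have hap : a ≠ p := fun h => haNz (h ▸ hpNz)
  have haq : a ≠ q := fun h => haNz (h ▸ hqNz)
  have hbx0 : b ≠ x0 := fun h => hbNz (h ▸ hx0Nz)
  have hbp : b ≠ p := fun h => hbNz (h ▸ hpNz)
  have hbq : b ≠ q := fun h => hbNz (h ▸ hqNz)
  have htax0 : ta ≠ x0 := fun h => htaNz (h ▸ hx0Nz)
  have htap : ta ≠ p := fun h => htaNz (h ▸ hpNz)
  have htaq : ta ≠ q := fun h => htaNz (h ▸ hqNz)
  have htbx0 : tb ≠ x0 := fun h => htbNz (h ▸ hx0Nz)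
  have htbp : tb ≠ p := fun h => htbNz (h ▸ hpNz)
  have htbq : tb ≠ q := fun h => htbNz (h ▸ hqNz)
  have hpz : p ≠ z := fun h => hznotNz (h ▸ hpNz)
  have hqz : q ≠ z := fun h => hznotNz (h ▸ hqNz)
  -- the complement U of {z,x0,p,q,ta,tb}
  set B : Finset V := {z, x0, p, q, ta, tb} with hBdef
  have hB6 : B.card = 6 := by
    rw [hBdef]
    rw [Finset.card_insert_of_notMem (by
      simp only [mem_insert, mem_singleton, not_or]
      exact ⟨Ne.symm hx0z, Ne.symm hpz, Ne.symm hqz, Ne.symm htaz, Ne.symm htbz⟩)]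
    rw [Finset.card_insert_of_notMem (by
      simp only [mem_insert, mem_singleton, not_or]
      exact ⟨Ne.symm hpx0, Ne.symm hqx0, Ne.symm htax0, Ne.symm htbx0⟩)]
    rw [Finset.card_insert_of_notMem (by
      simp only [mem_insert, mem_singleton, not_or]
      exact ⟨hpq, Ne.symm htap, Ne.symm htbp⟩)]
    rw [Finset.card_insert_of_notMem (by
      simp only [mem_insert, mem_singleton, not_or]
      exact ⟨Ne.symm htaq, Ne.symm htbq⟩)]
    rw [Finset.card_pair htatb]
  set U : Finset V := univ \ B with hUdef
  have hUcard : U.card = 3 := by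
    rw [hUdef, Finset.card_sdiff_of_subset (subset_univ _), card_univ, hcard, hB6]
  have haU : a ∈ U := by
    rw [hUdef, Finset.mem_sdiff]
    refine ⟨mem_univ _, ?_⟩
    rw [hBdef]
    simp only [mem_insert, mem_singleton, not_or]
    exact ⟨haz, hax0, hap, haq, Ne.symm htaa, Ne.symm htba⟩
  have hbU : b ∈ U := by
    rw [hUdef, Finset.mem_sdiff]
    refine ⟨mem_univ _, ?_⟩
    rw [hBdef]
    simp only [mem_insert, mem_singleton, not_or]
    exact ⟨hbz, hbx0, hbp, hbq, Ne.symm htab, Ne.symm htbb⟩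
  -- in-neighbourhood of ta is exactly U.erase a
  have hNtaSub : NinF A ta ⊆ U.erase a := by
    intro u hu
    have hAuta : A u ta := mem_NinF.1 hu
    rw [Finset.mem_erase]
    constructor
    · rintro rfl
      exact noDigon hgeo hAuta hAtaa
    rw [hUdef, Finset.mem_sdiff]
    refine ⟨mem_univ _, ?_⟩
    rw [hBdef]
    simp only [mem_insert, mem_singleton, not_or]
    refine ⟨?_, ?_, ?_, ?_, ?_, ?_⟩
    · rintro rfl; exact no12 hgeo hAza hAuta hAtaa
    · rintro rfl; exact no22 hgeo hAx0z hAza hAuta hAtaa (Ne.symm htaz)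
    · rintro rfl; exact no22 hgeo hApz hAza hAuta hAtaa (Ne.symm htaz)
    · rintro rfl; exact no22 hgeo hAqz hAza hAuta hAtaa (Ne.symm htaz)
    · rintro rfl; exact noLoop hgeo hAuta
    · intro hh
      have hAtt : A tb ta := by rw [← hh]; exact hAuta
      obtain ⟨w, hw, hAtbw⟩ := hreach tb htbz htbNz
      exact out3 (hout2 tb) hAtbw hAtbb hAtt
        (fun h => hbNz (h ▸ hw)) (fun h => htaNz (h ▸ hw)) (Ne.symm htab)
  have hNtbSub : NinF A tb ⊆ U.erase b := by
    intro u hu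
    have hAutb : A u tb := mem_NinF.1 hu
    rw [Finset.mem_erase]
    constructor
    · rintro rfl
      exact noDigon hgeo hAutb hAtbb
    rw [hUdef, Finset.mem_sdiff]
    refine ⟨mem_univ _, ?_⟩
    rw [hBdef]
    simp only [mem_insert, mem_singleton, not_or]
    refine ⟨?_, ?_, ?_, ?_, ?_, ?_⟩
    · rintro rfl; exact no12 hgeo hAzb hAutb hAtbb
    · rintro rfl; exact no22 hgeo hAx0z hAzb hAutb hAtbb (Ne.symm htbz)
    · rintro rfl; exact no22 hgeo hApz hAzb hAutb hAtbb (Ne.symm htbz)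
    · rintro rfl; exact no22 hgeo hAqz hAzb hAutb hAtbb (Ne.symm htbz)
    · intro hh
      have hAtt : A ta tb := by rw [← hh]; exact hAutb
      obtain ⟨w, hw, hAtaw⟩ := hreach ta htaz htaNz
      exact out3 (hout2 ta) hAtaw hAtaa hAtt
        (fun h => haNz (h ▸ hw)) (fun h => htbNz (h ▸ hw)) (Ne.symm htba)
    · rintro rfl; exact noLoop hgeo hAutb
  have htadeg : (NinF A ta).card = 2 := by rw [← inDeg_eq, hSdeg ta htaz htaNz]
  have htbdeg : (NinF A tb).card = 2 := by rw [← inDeg_eq, hSdeg tb htbz htbNz]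
  have heqa : NinF A ta = U.erase a :=
    Finset.eq_of_subset_of_card_le hNtaSub
      (by rw [Finset.card_erase_of_mem haU, hUcard, htadeg])
  have heqb : NinF A tb = U.erase b :=
    Finset.eq_of_subset_of_card_le hNtbSub
      (by rw [Finset.card_erase_of_mem hbU, hUcard, htbdeg])
  -- extract the fifth vertex e
  have hbNinta : b ∈ NinF A ta := by
    rw [heqa]
    exact Finset.mem_erase.2 ⟨Ne.symm hab, hbU⟩
  obtain ⟨e, he⟩ := Finset.card_eq_one.mp (show ((NinF A ta).erase b).card = 1 by
    rw [Finset.card_erase_of_mem hbNinta, htadeg])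
  have heb : e ≠ b := Finset.ne_of_mem_erase (by rw [he]; simp)
  have heNinta : e ∈ NinF A ta := Finset.mem_of_mem_erase (by rw [he]; simp)
  have hAeta : A e ta := mem_NinF.1 heNinta
  have heUe : e ∈ U.erase a := heqa ▸ heNinta
  have heU : e ∈ U := Finset.mem_of_mem_erase heUe
  have hAetb : A e tb := by
    have : e ∈ NinF A tb := by
      rw [heqb]
      exact Finset.mem_erase.2 ⟨heb, heU⟩
    exact mem_NinF.1 this
  have heB : e ∉ B := (Finset.mem_sdiff.1 heU).2
  rw [hBdef] at heB
  simp only [mem_insert, mem_singleton, not_or] at heB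
  obtain ⟨hez, hex0, hep, heq', heta, hetb⟩ := heB
  have heNz : e ∉ Nz := by
    rw [hNzeq]
    simp only [mem_insert, mem_singleton, not_or]
    exact ⟨hex0, hep, heq'⟩
  obtain ⟨w, hw, hAew⟩ := hreach e hez heNz
  exact out3 (hout2 e) hAew hAeta hAetb
    (fun h => htaNz (h ▸ hw)) (fun h => htbNz (h ▸ hw)) htatb
end

section
/- Let G be a k-geodetic digraph (k ≥ 3) with out-degree 2, order M(2,k)+2, and in-degree sequence (1,1,2,...,2,3,3). Then each of the two vertices of in-degree 3 has both vertices of in-degree 1 among its in-neighbours. -/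
namespace Stmt13

open Finset

lemma listsFinite {V : Type*} [Finite V] (n : ℕ) : {l : List V | l.length = n}.Finite := by
  induction n with
  | zero =>
    have h : {l : List V | l.length = 0} = {([] : List V)} := by
      ext l; simp [List.length_eq_zero_iff]
    rw [h]; exact Set.finite_singleton _
  | succ n ih =>
    have hsub : {l : List V | l.length = n + 1} ⊆
        Set.image2 List.cons Set.univ {l : List V | l.length = n} := by
      rintro (_ | ⟨a, t⟩) hl
      · simp at hl
      · exact ⟨a, trivial, t, by simpa using hl, rfl⟩
    exact (Set.Finite.image2 _ Set.finite_univ ih).subset hsub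

variable {V : Type*} [Fintype V]

noncomputable def Wf (A : V → V → Prop) (v' : V) (j : ℕ) : Finset (List V) :=
  Set.Finite.toFinset
    (show {l : List V | l.Chain' A ∧ l.getLast? = some v' ∧ l.length = j + 1}.Finite from
      (listsFinite (j+1)).subset fun _ hl => hl.2.2)

lemma mem_Wf {A : V → V → Prop} {v' : V} {j : ℕ} {l : List V} :
    l ∈ Wf A v' j ↔ l.Chain' A ∧ l.getLast? = some v' ∧ l.length = j + 1 :=
  Set.Finite.mem_toFinset _

lemma Wf_ne_nil {A : V → V → Prop} {v' : V} {j : ℕ} {l : List V} (hl : l ∈ Wf A v' j) :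
    l ≠ [] := by
  have := (mem_Wf.mp hl).2.2
  intro h; subst h; simp at this

lemma head?_eq_headI [Inhabited V] {l : List V} (h : l ≠ []) : l.head? = some l.headI := by
  cases l with
  | nil => exact absurd rfl h
  | cons a t => rfl

noncomputable def inN (A : V → V → Prop) (u : V) : Finset V :=
  Set.Finite.toFinset (Set.toFinite {u' | A u' u})

lemma mem_inN {A : V → V → Prop} {u u' : V} : u' ∈ inN A u ↔ A u' u :=
  Set.Finite.mem_toFinset _

lemma card_inN (A : V → V → Prop) (u : V) : (inN A u).card = inDeg A u :=
  (Set.ncard_eq_toFinset_card _ _).symm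

/-- walks of length `j+1` counted by extending walks of length `j` backwards. -/
lemma card_Wf_succ [Inhabited V] (A : V → V → Prop) (v' : V) (j : ℕ) :
    (Wf A v' (j+1)).card = ∑ l ∈ Wf A v' j, inDeg A l.headI := by
  classical
  have hset : Wf A v' (j+1)
      = (Wf A v' j).biUnion (fun l => (inN A l.headI).image (fun u' => u' :: l)) := by
    ext l'
    simp only [Finset.mem_biUnion, Finset.mem_image, mem_Wf, mem_inN]
    constructor
    · rintro ⟨hc, hlast, hlen⟩
      obtain ⟨a, t, rfl⟩ : ∃ a t, l' = a :: t := by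
        cases l' with
        | nil => simp at hlen
        | cons a t => exact ⟨a, t, rfl⟩
      have ht : t ≠ [] := by
        intro h; subst h; simp at hlen
      have hc' := List.isChain_cons.mp hc
      refine ⟨t, ⟨hc'.2, ?_, ?_⟩, a, ?_, rfl⟩
      · cases t with
        | nil => exact absurd rfl ht
        | cons b t' => rwa [List.getLast?_cons_cons] at hlast
      · simpa using hlen
      · exact hc'.1 _ (head?_eq_headI ht)
    · rintro ⟨l, ⟨hc, hlast, hlen⟩, u', harc, rfl⟩
      have hl : l ≠ [] := by intro h; subst h; simp at hlen
      refine ⟨List.isChain_cons.mpr ⟨?_, hc⟩, ?_, by simp [hlen]⟩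
      · intro y hy
        rw [head?_eq_headI hl] at hy
        cases hy; exact harc
      · cases l with
        | nil => exact absurd rfl hl
        | cons b t' => rwa [List.getLast?_cons_cons]
  rw [hset, Finset.card_biUnion]
  · refine Finset.sum_congr rfl fun l _ => ?_
    rw [Finset.card_image_of_injective _ (fun a b h => by simpa using h), card_inN]
  · intro l₁ h₁ l₂ h₂ hne
    rw [Function.onFun, Finset.disjoint_left]
    rintro x hx1 hx2
    obtain ⟨a, _, rfl⟩ := Finset.mem_image.mp hx1
    obtain ⟨b, _, hb⟩ := Finset.mem_image.mp hx2
    have hb' : b = a ∧ l₂ = l₁ := by simpa [List.cons.injEq] using hb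
    exact hne hb'.2.symm

variable [DecidableEq V]

noncomputable def Sf [Inhabited V] (A : V → V → Prop) (v' : V) (j : ℕ) : Finset V :=
  (Wf A v' j).image List.headI

lemma mem_walksUpTo_of_Wf [Inhabited V] {A : V → V → Prop} {k : ℕ} {v' : V} {j : ℕ}
    {l : List V} (hjk : j ≤ k) (hl : l ∈ Wf A v' j) : l ∈ walksUpTo A k l.headI v' := by
  obtain ⟨hc, hlast, hlen⟩ := mem_Wf.mp hl
  exact ⟨hc, head?_eq_headI (Wf_ne_nil hl), hlast, by omega⟩

lemma headI_injOn [Inhabited V] {A : V → V → Prop} {k : ℕ} (hgeo : IsGeodetic A k)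
    {v' : V} {j : ℕ} (hjk : j ≤ k) :
    Set.InjOn List.headI ((Wf A v' j : Finset (List V)) : Set (List V)) := by
  intro l₁ h₁ l₂ h₂ he
  have m₁ := mem_walksUpTo_of_Wf hjk (Finset.mem_coe.mp h₁)
  have m₂ := mem_walksUpTo_of_Wf hjk (Finset.mem_coe.mp h₂)
  rw [he] at m₁
  exact hgeo _ _ m₁ m₂

lemma card_Sf [Inhabited V] {A : V → V → Prop} {k : ℕ} (hgeo : IsGeodetic A k)
    {v' : V} {j : ℕ} (hjk : j ≤ k) : (Sf A v' j).card = (Wf A v' j).card := by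
  exact Finset.card_image_of_injOn (headI_injOn hgeo hjk)

lemma Sf_disjoint [Inhabited V] {A : V → V → Prop} {k : ℕ} (hgeo : IsGeodetic A k)
    {v' : V} {i j : ℕ} (hik : i ≤ k) (hjk : j ≤ k) (hij : i ≠ j) :
    Disjoint (Sf A v' i) (Sf A v' j) := by
  rw [Finset.disjoint_left]
  rintro u hu1 hu2
  obtain ⟨l₁, hl₁, rfl⟩ := Finset.mem_image.mp hu1
  obtain ⟨l₂, hl₂, he⟩ := Finset.mem_image.mp hu2
  have m₁ := mem_walksUpTo_of_Wf hik hl₁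
  have m₂ := mem_walksUpTo_of_Wf hjk hl₂
  rw [he] at m₂
  have : l₁ = l₂ := hgeo _ _ m₁ m₂
  subst this
  have e₁ := (mem_Wf.mp hl₁).2.2
  have e₂ := (mem_Wf.mp hl₂).2.2
  omega

lemma Wf_zero (A : V → V → Prop) (v' : V) : Wf A v' 0 = {[v']} := by
  ext l
  simp only [mem_Wf, Finset.mem_singleton]
  constructor
  · rintro ⟨hc, hlast, hlen⟩
    obtain ⟨a, rfl⟩ : ∃ a, l = [a] := by
      cases l with
      | nil => simp at hlen
      | cons a t =>
        cases t with
        | nil => exact ⟨a, rfl⟩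
        | cons b t' => simp at hlen
    simp at hlast; rw [hlast]
  · rintro rfl; exact ⟨List.isChain_singleton _, rfl, rfl⟩

lemma card_Wf_zero (A : V → V → Prop) (v' : V) : (Wf A v' 0).card = 1 := by
  rw [Wf_zero]; rfl

lemma card_Wf_one [Inhabited V] (A : V → V → Prop) (v' : V) :
    (Wf A v' 1).card = inDeg A v' := by
  rw [show (1:ℕ) = 0 + 1 from rfl, card_Wf_succ, Wf_zero]
  simp

lemma mem_Sf_one [Inhabited V] {A : V → V → Prop} {v' u : V} (hu : u ∈ Sf A v' 1) :
    A u v' := by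
  obtain ⟨l, hl, rfl⟩ := Finset.mem_image.mp hu
  obtain ⟨hc, hlast, hlen⟩ := mem_Wf.mp hl
  obtain ⟨a, b, rfl⟩ := List.length_eq_two.mp hlen
  simp only [List.getLast?_cons_cons] at hlast
  simp at hlast
  subst hlast
  simpa using List.isChain_pair.mp hc

/-- the key recurrence: `2 * c j ≤ c (j+1) + b j`. -/
lemma rec_ineq [Inhabited V] {A : V → V → Prop} {k : ℕ} (hgeo : IsGeodetic A k)
    (hall : ∀ v : V, inDeg A v = 1 ∨ inDeg A v = 2 ∨ inDeg A v = 3)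
    {v' : V} {j : ℕ} (hjk : j ≤ k) :
    2 * (Wf A v' j).card ≤ (Wf A v' (j+1)).card
      + ((Sf A v' j).filter (fun u => inDeg A u = 1)).card := by
  have hfilt : ((Sf A v' j).filter (fun u => inDeg A u = 1)).card
      = ((Wf A v' j).filter (fun l => inDeg A l.headI = 1)).card := by
    rw [Sf, Finset.filter_image]
    exact Finset.card_image_of_injOn
      (Set.InjOn.mono (by exact_mod_cast Finset.filter_subset _ _) (headI_injOn hgeo hjk))
  rw [card_Wf_succ, hfilt, Finset.card_filter]
  calc 2 * (Wf A v' j).card = ∑ _l ∈ Wf A v' j, 2 := by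
        rw [Finset.sum_const, smul_eq_mul, mul_comm]
    _ ≤ ∑ l ∈ Wf A v' j, (inDeg A l.headI + if inDeg A l.headI = 1 then 1 else 0) := by
        refine Finset.sum_le_sum fun l _ => ?_
        rcases hall l.headI with h | h | h <;> rw [h] <;> simp
    _ = _ := Finset.sum_add_distrib

lemma geom_sum_two (n : ℕ) : ∑ i ∈ Finset.range n, (2:ℤ)^i = 2^n - 1 := by
  induction n with
  | zero => simp
  | succ n ih => rw [Finset.sum_range_succ, ih]; ring

lemma arith (k : ℕ) (hk : 3 ≤ k) (c b : ℕ → ℕ)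
    (hc0 : c 0 = 1) (hc1 : c 1 = 3)
    (hrec : ∀ j, j ≤ k → 2 * c j ≤ c (j+1) + b j)
    (hb1 : b 1 ≤ 1)
    (hbud : b 1 + ∑ i ∈ Finset.Icc 2 (k-1), b i ≤ 2) :
    2^(k+1) + 2 ≤ ∑ j ∈ Finset.range (k+1), c j := by
  suffices h : (2:ℤ)^(k+1) + 2 ≤ ∑ j ∈ Finset.range (k+1), (c j : ℤ) by exact_mod_cast h
  have key : ∀ m, 3 ≤ m → m ≤ k →
      3 * 2^(m-1) ≤ (c m : ℤ) + (b 1 : ℤ) * 2^(m-2)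
        + (∑ i ∈ Finset.Icc 2 (m-1), (b i : ℤ)) * 2^(m-3) := by
    intro m hm
    induction m, hm using Nat.le_induction with
    | base =>
      intro _
      have h1 := hrec 1 (by omega)
      have h2 := hrec 2 (by omega)
      rw [hc1] at h1
      have h1' : (6:ℤ) ≤ (c 2 : ℤ) + (b 1 : ℤ) := by exact_mod_cast h1
      have h2' : 2 * (c 2 : ℤ) ≤ (c 3 : ℤ) + (b 2 : ℤ) := by exact_mod_cast h2
      have e1 : (3:ℕ) - 1 = 2 := rfl
      have e2 : (3:ℕ) - 2 = 1 := rfl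
      have e3 : (3:ℕ) - 3 = 0 := rfl
      rw [e1, e2, e3]
      rw [show Finset.Icc 2 (3-1) = {2} from by rfl, Finset.sum_singleton]
      push_cast
      linarith
    | succ m hm ih =>
      intro hmk
      have ih' := ih (by omega)
      obtain ⟨e, rfl⟩ : ∃ e, m = e + 3 := ⟨m - 3, by omega⟩
      have hr : 2 * (c (e+3) : ℤ) ≤ (c (e+4) : ℤ) + (b (e+3) : ℤ) := by
        exact_mod_cast hrec (e+3) (by omega)
      have hsum : ∑ i ∈ Finset.Icc 2 (e+3), (b i : ℤ)
          = ∑ i ∈ Finset.Icc 2 (e+2), (b i : ℤ) + (b (e+3) : ℤ) :=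
        Finset.sum_Icc_succ_top (by omega) _
      rw [show e+3-1 = e+2 from rfl, show e+3-2 = e+1 from rfl,
        show e+3-3 = e from rfl] at ih'
      rw [show e+3+1-1 = e+3 from rfl, show e+3+1-2 = e+2 from rfl,
        show e+3+1-3 = e+1 from rfl, show e+3+1 = e+4 from rfl, hsum]
      have hbm : (0:ℤ) ≤ (b (e+3) : ℤ) := by positivity
      have hp : (1:ℤ) ≤ 2^(e+1) := by
        have h0 : (2:ℤ)^0 ≤ 2^(e+1) := pow_le_pow_right₀ (by norm_num) (by omega)
        simpa using h0
      have hexp1 : (2:ℤ)^(e+1) = 2^e * 2 := pow_succ 2 e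
      have hexp2 : (2:ℤ)^(e+2) = 2^e * 4 := by rw [pow_add]; ring
      have hexp3 : (2:ℤ)^(e+3) = 2^e * 8 := by rw [pow_add]; ring
      have hint : (0:ℤ) ≤ (b (e+3):ℤ) * (2^(e+1) - 1) := mul_nonneg hbm (by linarith)
      rw [hexp2, hexp1] at ih'
      rw [hexp3, hexp2, hexp1]
      rw [hexp1] at hint
      ring_nf at ih' hint hr ⊢
      nlinarith [hint, ih', hr]
  -- base counts in ℤ
  have h1 := hrec 1 (by omega)
  rw [hc1] at h1
  have hc2 : (6:ℤ) ≤ (c 2:ℤ) + (b 1:ℤ) := by exact_mod_cast h1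
  have hb10 : (0:ℤ) ≤ (b 1:ℤ) := by positivity
  have hb11 : (b 1:ℤ) ≤ 1 := by exact_mod_cast hb1
  have hB0 : (0:ℤ) ≤ ∑ i ∈ Finset.Icc 2 (k-1), (b i : ℤ) :=
    Finset.sum_nonneg fun i _ => by positivity
  have hbud' : (b 1:ℤ) + ∑ i ∈ Finset.Icc 2 (k-1), (b i : ℤ) ≤ 2 := by exact_mod_cast hbud
  set b1 : ℤ := (b 1 : ℤ)
  set B : ℤ := ∑ i ∈ Finset.Icc 2 (k-1), (b i : ℤ) with hBdef
  -- pointwise lower bound on `Icc 3 k`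
  have hcm : ∀ m ∈ Finset.Icc 3 k, 3*2^(m-1) - b1*2^(m-2) - B*2^(m-3) ≤ (c m:ℤ) := by
    intro m hm
    rw [Finset.mem_Icc] at hm
    have hkey := key m hm.1 hm.2
    have hSB : ∑ i ∈ Finset.Icc 2 (m-1), (b i : ℤ) ≤ B := by
      rw [hBdef]
      refine Finset.sum_le_sum_of_subset_of_nonneg
        (Finset.Icc_subset_Icc_right (by omega)) fun i _ _ => by positivity
    have := mul_le_mul_of_nonneg_right hSB (by positivity : (0:ℤ) ≤ 2^(m-3))
    linarith
  -- sum the lower bounds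
  have hsum1 : ∑ m ∈ Finset.Icc 3 k, ((3:ℤ)*2^(m-1) - b1*2^(m-2) - B*2^(m-3))
      = (12 - 2*b1 - B) * (2^(k-2) - 1) := by
    rw [← Finset.Ico_add_one_right_eq_Icc, Finset.sum_Ico_eq_sum_range,
      show k+1-3 = k-2 from by omega]
    rw [Finset.sum_congr rfl (fun i _ => by
      rw [show 3+i-1 = i+2 from by omega, show 3+i-2 = i+1 from by omega,
        show 3+i-3 = i from by omega,
        show (3:ℤ)*2^(i+2) - b1*2^(i+1) - B*2^i = (12 - 2*b1 - B) * 2^i from by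
          rw [pow_add, pow_add]; ring])]
    rw [← Finset.mul_sum, geom_sum_two]
  have hsum2 : ∑ m ∈ Finset.Icc 3 k, ((3:ℤ)*2^(m-1) - b1*2^(m-2) - B*2^(m-3))
      ≤ ∑ m ∈ Finset.Icc 3 k, (c m : ℤ) := Finset.sum_le_sum hcm
  -- split the full sum
  have hsplit : Finset.range (k+1) = insert 0 (insert 1 (insert 2 (Finset.Icc 3 k))) := by
    ext x
    simp only [Finset.mem_range, Finset.mem_insert, Finset.mem_Icc]
    omega
  rw [hsplit, Finset.sum_insert (by simp [Finset.mem_Icc]),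
    Finset.sum_insert (by simp [Finset.mem_Icc]),
    Finset.sum_insert (by simp [Finset.mem_Icc]), hc0, hc1]
  have ht : (2:ℤ)^(k+1) = 8 * 2^(k-2) := by
    rw [show k+1 = (k-2)+3 from by omega, pow_add]; ring
  have ht2 : (2:ℤ) ≤ 2^(k-2) := by
    calc (2:ℤ) = 2^1 := by norm_num
    _ ≤ 2^(k-2) := pow_le_pow_right₀ (by norm_num) (by omega)
  rw [ht]
  push_cast
  nlinarith [mul_nonneg (sub_nonneg.mpr hb11) (sub_nonneg.mpr ht2),
    mul_nonneg (sub_nonneg.mpr hbud') (sub_nonneg.mpr ht2)]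

end Stmt13

open Stmt13 in
/-- Let `G` be a `k`-geodetic digraph (`k ≥ 3`) with out-degree 2, order
`M(2,k)+2`, and in-degree sequence `(1,1,2,…,2,3,3)`.  Then each of the two vertices of
in-degree 3 has both vertices of in-degree 1 among its in-neighbours. -/
theorem stmt13 {V : Type*} [Fintype V] (A : V → V → Prop) (k : ℕ) (hk : 3 ≤ k)
    (hgeo : IsGeodetic A k) (hout : ∀ u : V, outDeg A u = 2)
    (hcard : Fintype.card V = moore 2 k + 2)
    (h1 : {v : V | inDeg A v = 1}.ncard = 2)
    (h3 : {v : V | inDeg A v = 3}.ncard = 2)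
    (hall : ∀ v : V, inDeg A v = 1 ∨ inDeg A v = 2 ∨ inDeg A v = 3) :
    ∀ v' : V, inDeg A v' = 3 → ∀ v : V, inDeg A v = 1 → A v v' := by
  classical
  intro v' hv' v hv
  by_contra hAvv'
  have hne : Nonempty V := by
    have : 0 < Fintype.card V := by rw [hcard]; omega
    exact Fintype.card_pos_iff.mp this
  obtain ⟨v0⟩ := hne
  letI : Inhabited V := ⟨v0⟩
  -- abbreviations
  set cf : ℕ → ℕ := fun j => (Wf A v' j).card with hcf
  set bf : ℕ → ℕ := fun j => ((Sf A v' j).filter (fun u => inDeg A u = 1)).card with hbf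
  -- the finset of in-degree-1 vertices
  have honesfin : ({u : V | inDeg A u = 1}).Finite := Set.toFinite _
  set ones : Finset V := honesfin.toFinset with hones
  have hones_card : ones.card = 2 := by
    rw [hones, ← Set.ncard_eq_toFinset_card _ honesfin]; exact h1
  have hv_mem : v ∈ ones := by
    rw [hones, Set.Finite.mem_toFinset]; exact hv
  -- b 1 ≤ 1
  have hb1 : bf 1 ≤ 1 := by
    have hsub : (Sf A v' 1).filter (fun u => inDeg A u = 1) ⊆ ones.erase v := by
      intro u hu
      rw [Finset.mem_filter] at hu
      refine Finset.mem_erase.mpr ⟨?_, ?_⟩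
      · rintro rfl; exact hAvv' (mem_Sf_one hu.1)
      · rw [hones, Set.Finite.mem_toFinset]; exact hu.2
    calc bf 1 ≤ (ones.erase v).card := Finset.card_le_card hsub
      _ = 1 := by rw [Finset.card_erase_of_mem hv_mem, hones_card]
  -- the budget
  have hbud : bf 1 + ∑ i ∈ Finset.Icc 2 (k-1), bf i ≤ 2 := by
    have h1k : Finset.Icc 1 (k-1) = insert 1 (Finset.Icc 2 (k-1)) := by
      ext x
      simp only [Finset.mem_Icc, Finset.mem_insert]
      omega
    have hsum : bf 1 + ∑ i ∈ Finset.Icc 2 (k-1), bf i = ∑ i ∈ Finset.Icc 1 (k-1), bf i := by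
      rw [h1k, Finset.sum_insert (by simp)]
    rw [hsum]
    have hdisj : ∀ i ∈ Finset.Icc 1 (k-1), ∀ j ∈ Finset.Icc 1 (k-1), i ≠ j →
        Disjoint ((Sf A v' i).filter (fun u => inDeg A u = 1))
          ((Sf A v' j).filter (fun u => inDeg A u = 1)) := by
      intro i hi j hj hij
      rw [Finset.mem_Icc] at hi hj
      exact Finset.disjoint_filter_filter
        (Sf_disjoint hgeo (by omega) (by omega) hij)
    have hbu : ∑ i ∈ Finset.Icc 1 (k-1), bf i
        = ((Finset.Icc 1 (k-1)).biUnion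
            (fun j => (Sf A v' j).filter (fun u => inDeg A u = 1))).card :=
      (Finset.card_biUnion hdisj).symm
    rw [hbu, ← hones_card]
    refine Finset.card_le_card ?_
    intro u hu
    rw [Finset.mem_biUnion] at hu
    obtain ⟨j, _, hj⟩ := hu
    rw [hones, Set.Finite.mem_toFinset]
    exact (Finset.mem_filter.mp hj).2
  -- the total number of vertices reaching v' within k steps
  have hN : ∑ j ∈ Finset.range (k+1), cf j ≤ Fintype.card V := by
    have hceq : ∀ j ∈ Finset.range (k+1), cf j = (Sf A v' j).card := by
      intro j hj
      rw [Finset.mem_range] at hj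
      exact (card_Sf hgeo (by omega)).symm
    rw [Finset.sum_congr rfl hceq]
    have hdisj : ∀ i ∈ Finset.range (k+1), ∀ j ∈ Finset.range (k+1), i ≠ j →
        Disjoint (Sf A v' i) (Sf A v' j) := by
      intro i hi j hj hij
      rw [Finset.mem_range] at hi hj
      exact Sf_disjoint hgeo (by omega) (by omega) hij
    rw [← Finset.card_biUnion hdisj]
    exact Finset.card_le_univ _
  -- base counts and the recurrence
  have hc0 : cf 0 = 1 := card_Wf_zero A v'
  have hc1 : cf 1 = 3 := by
    show (Wf A v' 1).card = 3
    rw [card_Wf_one, hv']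
  have hrec : ∀ j, j ≤ k → 2 * cf j ≤ cf (j+1) + bf j := fun j hj =>
    rec_ineq hgeo hall hj
  have harith := Stmt13.arith k hk cf bf hc0 hc1 hrec hb1 hbud
  -- Moore bound arithmetic
  have hmoore : moore 2 k + 1 = 2^(k+1) := by
    have haux : ∀ n : ℕ, (∑ i ∈ Finset.range n, 2^i) + 1 = 2^n := by
      intro n
      induction n with
      | zero => simp
      | succ n ih =>
        rw [Finset.sum_range_succ, pow_succ]
        omega
    exact haux (k+1)
  rw [hcard] at hN
  omega
end
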